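/- arXiv:1710.02550 — 2 statements merged into one kernel-verified Lean document; each statement's English description precedes it below -/
import Mathlib

section
/- For each integer n ≥ 1 there exists a constant Cₙ < ∞ such that for every real K ≥ 1 and every x ∈ (0,1): |dⁿ/dxⁿ cosh(K·arccos x)| ≤ Cₙ·Kⁿ·e^{Kπ/2}. -/
open Real Filter Set Topology

noncomputable def fc (K : ℝ) : ℝ → ℝ := fun x : ℝ => Real.cosh (K * Real.arccos x)
noncomputable def gc (K : ℝ) (m : ℕ) : ℝ → ℝ := iteratedDeriv m (fc K)

lemma mem_S_ne {x : ℝ} (hx : x ∈ Set.Ioo (-1:ℝ) 1) : x ≠ -1 ∧ x ≠ 1 :=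
  ⟨ne_of_gt hx.1, ne_of_lt hx.2⟩

lemma contDiffOn_fc (K : ℝ) (N : ℕ) : ContDiffOn ℝ N (fc K) (Set.Ioo (-1:ℝ) 1) := by
  intro x hx
  exact (ContDiffAt.contDiffWithinAt
    (Real.contDiff_cosh.contDiffAt.comp _
      ((Real.contDiffAt_arccos (mem_S_ne hx).1 (mem_S_ne hx).2).const_smul K)))

lemma iteratedDerivWithin_isOpen {f : ℝ → ℝ} {s : Set ℝ} (m : ℕ) (hs : IsOpen s) {x : ℝ}
    (hx : x ∈ s) : iteratedDerivWithin m f s x = iteratedDeriv m f x := by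
  simp only [iteratedDerivWithin, iteratedDeriv]
  rw [iteratedFDerivWithin_of_isOpen m hs hx]

lemma hasDerivAt_gc (K : ℝ) (m : ℕ) {x : ℝ} (hx : x ∈ Set.Ioo (-1:ℝ) 1) :
    HasDerivAt (gc K m) (gc K (m+1) x) x := by
  have hS : IsOpen (Set.Ioo (-1:ℝ) 1) := isOpen_Ioo
  have hd : DifferentiableWithinAt ℝ (iteratedDerivWithin m (fc K) (Set.Ioo (-1:ℝ) 1))
      (Set.Ioo (-1:ℝ) 1) x := by
    refine (contDiffOn_fc K (m+1)).differentiableOn_iteratedDerivWithin ?_ hS.uniqueDiffOn x hx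
    exact_mod_cast Nat.lt_succ_self m
  have hev : iteratedDerivWithin m (fc K) (Set.Ioo (-1:ℝ) 1) =ᶠ[𝓝 x] iteratedDeriv m (fc K) := by
    filter_upwards [hS.mem_nhds hx] with y hy using iteratedDerivWithin_isOpen m hS hy
  have hd2 : DifferentiableAt ℝ (iteratedDeriv m (fc K)) x := by
    have := hd.differentiableAt (hS.mem_nhds hx)
    exact this.congr_of_eventuallyEq hev.symm
  have := hd2.hasDerivAt
  rw [show gc K (m+1) x = deriv (iteratedDeriv m (fc K)) x by
    rw [gc, iteratedDeriv_succ]]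
  exact this

lemma hasDerivAt_fc (K : ℝ) {x : ℝ} (hx : x ∈ Set.Ioo (-1:ℝ) 1) :
    HasDerivAt (fc K) (-(K * Real.sinh (K * Real.arccos x)) / Real.sqrt (1 - x^2)) x := by
  have ha := Real.hasDerivAt_arccos (mem_S_ne hx).1 (mem_S_ne hx).2
  have h2 : HasDerivAt (fun y : ℝ => K * Real.arccos y) (K * -(1 / Real.sqrt (1 - x^2))) x :=
    ha.const_mul K
  have h3 := h2.cosh
  convert h3 using 1
  · rfl
  · ring

lemma gc1_eq (K : ℝ) {x : ℝ} (hx : x ∈ Set.Ioo (-1:ℝ) 1) :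
    gc K 1 x = -(K * Real.sinh (K * Real.arccos x)) / Real.sqrt (1 - x^2) := by
  rw [gc, iteratedDeriv_one]
  exact (hasDerivAt_fc K hx).deriv
lemma ode_base (K : ℝ) {x : ℝ} (hx : x ∈ Set.Ioo (-1:ℝ) 1) :
    (1 - x^2) * gc K 2 x = x * gc K 1 x + K^2 * gc K 0 x := by
  have h1x : (0:ℝ) < 1 - x^2 := by nlinarith [hx.1, hx.2]
  have hs : (0:ℝ) < Real.sqrt (1 - x^2) := Real.sqrt_pos.2 h1x
  have hs2 : Real.sqrt (1 - x^2) ^ 2 = 1 - x^2 := Real.sq_sqrt h1x.le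
  have ha := Real.hasDerivAt_arccos (mem_S_ne hx).1 (mem_S_ne hx).2
  have h2 : HasDerivAt (fun y : ℝ => K * Real.arccos y) (K * -(1 / Real.sqrt (1 - x^2))) x :=
    ha.const_mul K
  have hN : HasDerivAt (fun y : ℝ => -(K * Real.sinh (K * Real.arccos y)))
      (-(K * (Real.cosh (K * Real.arccos x) * (K * -(1 / Real.sqrt (1 - x^2)))))) x :=
    (h2.sinh.const_mul K).neg
  have hinner : HasDerivAt (fun y : ℝ => 1 - y^2) (-(2*x^1)) x := by
    simpa using (hasDerivAt_pow 2 x).const_sub 1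
  have hD : HasDerivAt (fun y : ℝ => Real.sqrt (1 - y^2))
      (1 / (2 * Real.sqrt (1 - x^2)) * -(2*x^1)) x :=
    (Real.hasDerivAt_sqrt (ne_of_gt h1x)).comp x hinner
  have hquot := hN.div hD (ne_of_gt hs)
  have hg1ev : (fun y : ℝ => -(K * Real.sinh (K * Real.arccos y)) / Real.sqrt (1 - y^2))
      =ᶠ[𝓝 x] gc K 1 := by
    filter_upwards [isOpen_Ioo.mem_nhds hx] with y hy using (gc1_eq K hy).symm
  have hg1 := hquot.congr_of_eventuallyEq hg1ev.symm
  have e2 : gc K 2 x = deriv (gc K 1) x := by simp only [gc, iteratedDeriv_succ, iteratedDeriv_one]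
  rw [e2, hg1.deriv, gc1_eq K hx]
  have e0 : gc K 0 x = Real.cosh (K * Real.arccos x) := by simp only [gc, iteratedDeriv_zero, fc]
  rw [e0]
  field_simp
  rw [hs2]; ring
lemma ode (K : ℝ) (m : ℕ) : ∀ x ∈ Set.Ioo (-1:ℝ) 1,
    (1 - x^2) * gc K (m+2) x
      = (2*(m:ℝ)+1) * x * gc K (m+1) x + ((m:ℝ)^2 + K^2) * gc K m x := by
  induction m with
  | zero =>
    intro x hx
    have := ode_base K hx
    push_cast
    linarith [this]
  | succ m IH =>
    intro x hx
    have hA : HasDerivAt (fun y : ℝ => (1 - y^2) * gc K (m+2) y)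
        (-(2*x^1) * gc K (m+2) x + (1 - x^2) * gc K (m+3) x) x := by
      have hinner : HasDerivAt (fun y : ℝ => 1 - y^2) (-(2*x^1)) x := by
        simpa using (hasDerivAt_pow 2 x).const_sub 1
      exact hinner.mul (hasDerivAt_gc K (m+2) hx)
    have hB : HasDerivAt
        (fun y : ℝ => (2*(m:ℝ)+1) * y * gc K (m+1) y + ((m:ℝ)^2 + K^2) * gc K m y)
        (((2*(m:ℝ)+1) * 1) * gc K (m+1) x + ((2*(m:ℝ)+1) * x) * gc K (m+2) x
          + ((m:ℝ)^2 + K^2) * gc K (m+1) x) x := by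
      have h1 : HasDerivAt (fun y : ℝ => (2*(m:ℝ)+1) * y) ((2*(m:ℝ)+1) * 1) x := by
        simpa using (hasDerivAt_id x).const_mul (2*(m:ℝ)+1)
      exact (h1.mul (hasDerivAt_gc K (m+1) hx)).add
        ((hasDerivAt_gc K m hx).const_mul ((m:ℝ)^2 + K^2))
    have hEq : (fun y : ℝ => (1 - y^2) * gc K (m+2) y)
        =ᶠ[𝓝 x] (fun y : ℝ => (2*(m:ℝ)+1) * y * gc K (m+1) y + ((m:ℝ)^2 + K^2) * gc K m y) := by
      filter_upwards [isOpen_Ioo.mem_nhds hx] with y hy using IH y hy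
    have huniq := hA.unique (hB.congr_of_eventuallyEq hEq)
    push_cast
    linear_combination huniq
lemma my_cosh_le_exp {t : ℝ} (ht : 0 ≤ t) : Real.cosh t ≤ Real.exp t := by
  rw [Real.cosh_eq]
  have := Real.exp_le_exp.2 (by linarith : -t ≤ t)
  linarith

lemma my_sinh_le_half_exp (t : ℝ) : Real.sinh t ≤ Real.exp t / 2 := by
  rw [Real.sinh_eq]
  have := Real.exp_pos (-t)
  linarith

lemma my_sinh_le_mul_exp {t : ℝ} (ht : 0 ≤ t) : Real.sinh t ≤ t * Real.exp t := by
  have h1 : 1 - 2*t ≤ Real.exp (-2*t) := by linarith [Real.add_one_le_exp (-2*t)]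
  have h2 : Real.exp (-2*t) * Real.exp t = Real.exp (-t) := by
    rw [← Real.exp_add]; ring_nf
  have h3 := Real.exp_pos t
  rw [Real.sinh_eq]
  nlinarith [h3]

lemma arccos_facts {x : ℝ} (hx : x ∈ Set.Ioo (0:ℝ) 1) :
    0 < Real.arccos x ∧ Real.arccos x ≤ π/2 ∧ Real.sin (Real.arccos x) = Real.sqrt (1 - x^2) :=
  ⟨Real.arccos_pos.2 hx.2, Real.arccos_le_pi_div_two.2 hx.1.le, Real.sin_arccos x⟩

lemma arccos_le_pi_div_three {x : ℝ} (hx : (1/2:ℝ) ≤ x) : Real.arccos x ≤ π/3 := by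
  have h1 : Real.arccos x ≤ Real.arccos (1/2) := by
    rw [Real.arccos_eq_pi_div_two_sub_arcsin, Real.arccos_eq_pi_div_two_sub_arcsin]
    have := Real.monotone_arcsin hx
    linarith
  have h2 : Real.arccos (1/2:ℝ) = π/3 := by
    rw [← Real.cos_pi_div_three]
    exact Real.arccos_cos (by positivity) (by linarith [Real.pi_pos])
  linarith

lemma abs_gc1 (K : ℝ) (hK : 0 < K) {x : ℝ} (hx : x ∈ Set.Ioo (0:ℝ) 1) :
    |gc K 1 x| = K * Real.sinh (K * Real.arccos x) / Real.sqrt (1 - x^2) := by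
  have h1x : (0:ℝ) < 1 - x^2 := by nlinarith [hx.1, hx.2]
  have hs : (0:ℝ) < Real.sqrt (1 - x^2) := Real.sqrt_pos.2 h1x
  have hθ := (arccos_facts hx).1
  have hsh : 0 ≤ Real.sinh (K * Real.arccos x) :=
    Real.sinh_nonneg_iff.2 (by positivity)
  rw [gc1_eq K (by constructor <;> nlinarith [hx.1, hx.2] : x ∈ Set.Ioo (-1:ℝ) 1)]
  rw [abs_div, abs_neg, abs_of_nonneg (by positivity), abs_of_nonneg hs.le]

lemma abs_gc0 (K : ℝ) (x : ℝ) : |gc K 0 x| = Real.cosh (K * Real.arccos x) := by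
  simp only [gc, iteratedDeriv_zero, fc]
  exact abs_of_pos (Real.cosh_pos _)
lemma sub_sq_pos {x : ℝ} (hx : x ∈ Set.Ioo (0:ℝ) 1) : (0:ℝ) < 1 - x^2 := by
  nlinarith [hx.1, hx.2]

lemma mem_S_of_mem01 {x : ℝ} (hx : x ∈ Set.Ioo (0:ℝ) 1) : x ∈ Set.Ioo (-1:ℝ) 1 :=
  ⟨by linarith [hx.1], hx.2⟩

lemma theta_le_sin {x : ℝ} (hx : x ∈ Set.Ioo (0:ℝ) 1) :
    Real.arccos x ≤ (π/2) * Real.sqrt (1 - x^2) := by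
  obtain ⟨h1, h2, h3⟩ := arccos_facts hx
  have := Real.mul_le_sin (x := Real.arccos x) h1.le h2
  rw [h3, div_mul_eq_mul_div, div_le_iff₀ Real.pi_pos] at this
  nlinarith

lemma gc1_bound_global (K : ℝ) (hK : 0 < K) {x : ℝ} (hx : x ∈ Set.Ioo (0:ℝ) 1) :
    |gc K 1 x| ≤ K^2 * (π/2) * Real.exp (K * π/2) := by
  obtain ⟨h1, h2, h3⟩ := arccos_facts hx
  have h1x := sub_sq_pos hx
  have hs : (0:ℝ) < Real.sqrt (1 - x^2) := Real.sqrt_pos.2 h1x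
  have hπ := Real.pi_pos
  have key : Real.sinh (K * Real.arccos x) ≤ K * ((π/2) * Real.sqrt (1-x^2)) * Real.exp (K*π/2) := by
    calc Real.sinh (K * Real.arccos x) ≤ (K * Real.arccos x) * Real.exp (K * Real.arccos x) :=
          my_sinh_le_mul_exp (by positivity)
    _ ≤ (K * ((π/2) * Real.sqrt (1-x^2))) * Real.exp (K*π/2) := by
        apply mul_le_mul
        · have := theta_le_sin hx
          nlinarith
        · exact Real.exp_le_exp.2 (by nlinarith)
        · positivity
        · positivity
  rw [abs_gc1 K hK hx, div_le_iff₀ hs]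
  nlinarith

lemma gc0_bound_global (K : ℝ) (hK : 0 < K) {x : ℝ} (hx : x ∈ Set.Ioo (0:ℝ) 1) :
    |gc K 0 x| ≤ Real.exp (K * π/2) := by
  obtain ⟨h1, h2, h3⟩ := arccos_facts hx
  rw [abs_gc0]
  calc Real.cosh (K * Real.arccos x) ≤ Real.cosh (K * (π/2)) := by
        rw [Real.cosh_le_cosh]
        rw [abs_of_nonneg (by positivity), abs_of_nonneg (by positivity)]
        nlinarith
  _ ≤ Real.exp (K * π/2) := by
      have := my_cosh_le_exp (t := K * (π/2)) (by positivity)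
      calc Real.cosh (K * (π/2)) ≤ Real.exp (K * (π/2)) := this
      _ = Real.exp (K * π/2) := by ring_nf

/-- crude a priori bound: `(1-x²)^m * |g_{m+1}| ≤ D` on `(0,1)`, `D` may depend on `K`. -/
lemma crude (K : ℝ) (hK : 0 < K) (m : ℕ) :
    ∃ D : ℝ, ∀ x ∈ Set.Ioo (0:ℝ) 1, (1-x^2)^m * |gc K (m+1) x| ≤ D := by
  suffices h : ∀ m : ℕ,
      (∃ D : ℝ, ∀ x ∈ Set.Ioo (0:ℝ) 1, (1-x^2)^m * |gc K (m+1) x| ≤ D) ∧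
      (∃ D : ℝ, ∀ x ∈ Set.Ioo (0:ℝ) 1, (1-x^2)^(m+1) * |gc K (m+2) x| ≤ D) by
    exact (h m).1
  intro m
  induction m with
  | zero =>
    constructor
    · refine ⟨K^2 * (π/2) * Real.exp (K * π/2), fun x hx => ?_⟩
      simpa using gc1_bound_global K hK hx
    · refine ⟨K^2 * (π/2) * Real.exp (K * π/2) + K^2 * Real.exp (K * π/2), fun x hx => ?_⟩
      have hode := ode K 0 x (mem_S_of_mem01 hx)
      have h1x := sub_sq_pos hx
      have e1 : (1-x^2)^(0+1) * |gc K (0+2) x| = |(1-x^2) * gc K (0+2) x| := by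
        rw [abs_mul, abs_of_pos h1x]; ring_nf
      rw [e1, hode]
      have b1 := gc1_bound_global K hK hx
      have b0 := gc0_bound_global K hK hx
      have hxx : |x| ≤ 1 := by rw [abs_of_pos hx.1]; linarith [hx.2]
      have habs : |(2*((0:ℕ):ℝ)+1) * x * gc K (0+1) x + (((0:ℕ):ℝ)^2 + K^2) * gc K 0 x|
          ≤ |gc K 1 x| + K^2 * |gc K 0 x| := by
        refine (abs_add_le _ _).trans ?_
        rw [abs_mul, abs_mul, abs_mul]
        simp only [Nat.cast_zero]
        norm_num
        have h0 : |x| * |gc K 1 x| ≤ |gc K 1 x| :=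
          mul_le_mul_of_nonneg_right hxx (abs_nonneg _) |>.trans_eq (one_mul _)
        have h1 : |K^2| = K^2 := abs_of_nonneg (sq_nonneg K)
        nlinarith [abs_nonneg (gc K 1 x), abs_nonneg (gc K 0 x)]
      refine habs.trans ?_
      have hK2 : (0:ℝ) ≤ K^2 := sq_nonneg K
      nlinarith [Real.exp_pos (K*π/2)]
  | succ m IH =>
    obtain ⟨⟨D1, hD1⟩, ⟨D2, hD2⟩⟩ := IH
    refine ⟨⟨D2, hD2⟩, ⟨(2*(((m+1):ℕ):ℝ)+1) * D2 + ((((m+1):ℕ):ℝ)^2 + K^2) * D1,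
      fun x hx => ?_⟩⟩
    have hode := ode K (m+1) x (mem_S_of_mem01 hx)
    have h1x := sub_sq_pos hx
    have h1x' : 1 - x^2 ≤ 1 := by nlinarith [hx.1]
    have hxx : |x| ≤ 1 := by rw [abs_of_pos hx.1]; linarith [hx.2]
    have hcoef1 : (0:ℝ) ≤ 2*(((m+1):ℕ):ℝ)+1 := by positivity
    have hcoef2 : (0:ℝ) ≤ (((m+1):ℕ):ℝ)^2 + K^2 := by positivity
    have key : (1-x^2)^(m+1+1) * |gc K (m+1+2) x|
        = (1-x^2)^(m+1) * |(1-x^2) * gc K (m+1+2) x| := by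
      rw [abs_mul, abs_of_pos h1x]; ring
    rw [key, hode]
    have hsplit : |(2*(((m+1):ℕ):ℝ)+1) * x * gc K (m+1+1) x
          + ((((m+1):ℕ):ℝ)^2 + K^2) * gc K (m+1) x|
        ≤ (2*(((m+1):ℕ):ℝ)+1) * |gc K (m+1+1) x|
          + ((((m+1):ℕ):ℝ)^2 + K^2) * |gc K (m+1) x| := by
      refine (abs_add_le _ _).trans ?_
      rw [abs_mul, abs_mul, abs_mul, abs_of_nonneg hcoef1, abs_of_nonneg hcoef2]
      have h5 : (2*(((m+1):ℕ):ℝ)+1) * |x| * |gc K (m+1+1) x|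
          ≤ (2*(((m+1):ℕ):ℝ)+1) * |gc K (m+1+1) x| := by
        have h6 : (2*(((m+1):ℕ):ℝ)+1) * |x| ≤ (2*(((m+1):ℕ):ℝ)+1) := by
          nlinarith [abs_nonneg x]
        exact mul_le_mul_of_nonneg_right h6 (abs_nonneg _)
      linarith
    refine le_trans (mul_le_mul_of_nonneg_left hsplit (by positivity)) ?_
    have t1 : (1-x^2)^(m+1) * |gc K (m+1+1) x| ≤ D2 := hD2 x hx
    have t2 : (1-x^2)^m * |gc K (m+1) x| ≤ D1 := hD1 x hx
    have t3 : (1-x^2)^(m+1) * |gc K (m+1) x| ≤ D1 := by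
      have h0 : (0:ℝ) ≤ (1-x^2)^m * |gc K (m+1) x| := by positivity
      calc (1-x^2)^(m+1) * |gc K (m+1) x| = (1-x^2) * ((1-x^2)^m * |gc K (m+1) x|) := by ring
      _ ≤ 1 * ((1-x^2)^m * |gc K (m+1) x|) := by nlinarith
      _ ≤ D1 := by linarith
    calc (1-x^2)^(m+1) * ((2*(((m+1):ℕ):ℝ)+1) * |gc K (m+1+1) x|
          + ((((m+1):ℕ):ℝ)^2 + K^2) * |gc K (m+1) x|)
        = (2*(((m+1):ℕ):ℝ)+1) * ((1-x^2)^(m+1) * |gc K (m+1+1) x|)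
          + ((((m+1):ℕ):ℝ)^2 + K^2) * ((1-x^2)^(m+1) * |gc K (m+1) x|) := by ring
      _ ≤ (2*(((m+1):ℕ):ℝ)+1) * D2 + ((((m+1):ℕ):ℝ)^2 + K^2) * D1 :=
          add_le_add (mul_le_mul_of_nonneg_left t1 hcoef1) (mul_le_mul_of_nonneg_left t3 hcoef2)
noncomputable def Tc : ℕ → ℝ
  | 0 => 1
  | 1 => 1
  | (m+2) => (2*(m:ℝ)+1) * Tc (m+1) + 2*((m:ℝ)^2+1) * Tc m

lemma Tc_pos : ∀ m, 0 < Tc m := by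
  have H : ∀ m, 0 < Tc m ∧ 0 < Tc (m+1) := by
    intro m
    induction m with
    | zero => constructor <;> · rw [Tc]; norm_num
    | succ m IH =>
      refine ⟨IH.2, ?_⟩
      rw [show m+1+1 = m+2 from rfl, Tc]
      have h1 := IH.1; have h2 := IH.2
      positivity
  exact fun m => (H m).1

set_option maxHeartbeats 1600000 in
lemma boundL (m : ℕ) (K : ℝ) (hK : 1 ≤ K) :
    ∀ x ∈ Set.Ioc (0:ℝ) (1/2), |gc K m x| ≤ Tc m * K^m * Real.exp (K*π/2) := by
  have hK0 : (0:ℝ) < K := lt_of_lt_of_le one_pos hK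
  have hE : (0:ℝ) < Real.exp (K*π/2) := Real.exp_pos _
  suffices h : ∀ m : ℕ,
      (∀ x ∈ Set.Ioc (0:ℝ) (1/2), |gc K m x| ≤ Tc m * K^m * Real.exp (K*π/2)) ∧
      (∀ x ∈ Set.Ioc (0:ℝ) (1/2), |gc K (m+1) x| ≤ Tc (m+1) * K^(m+1) * Real.exp (K*π/2)) by
    exact (h m).1
  intro m
  induction m with
  | zero =>
    constructor
    · intro x hx
      have hx01 : x ∈ Set.Ioo (0:ℝ) 1 := ⟨hx.1, by linarith [hx.2]⟩
      have := gc0_bound_global K hK0 hx01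
      rw [Tc]
      simpa using this
    · intro x hx
      have hx01 : x ∈ Set.Ioo (0:ℝ) 1 := ⟨hx.1, by linarith [hx.2]⟩
      obtain ⟨h1, h2, h3⟩ := arccos_facts hx01
      have h1x := sub_sq_pos hx01
      have hs : (0:ℝ) < Real.sqrt (1 - x^2) := Real.sqrt_pos.2 h1x
      have hs2 : Real.sqrt (1 - x^2) ^ 2 = 1 - x^2 := Real.sq_sqrt h1x.le
      have hshalf : (1:ℝ)/2 ≤ Real.sqrt (1-x^2) := by nlinarith [hx.1, hx.2]
      rw [abs_gc1 K hK0 hx01]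
      have hsinh : Real.sinh (K * Real.arccos x) ≤ Real.exp (K*π/2) / 2 := by
        refine (my_sinh_le_half_exp _).trans ?_
        have : Real.exp (K * Real.arccos x) ≤ Real.exp (K*π/2) := by
          apply Real.exp_le_exp.2; nlinarith
        linarith
      rw [div_le_iff₀ hs, Tc]
      have hsinh0 : 0 ≤ Real.sinh (K * Real.arccos x) :=
        Real.sinh_nonneg_iff.2 (by positivity)
      calc K * Real.sinh (K * Real.arccos x) ≤ K * (Real.exp (K*π/2)/2) := by
            exact mul_le_mul_of_nonneg_left hsinh hK0.le
        _ ≤ (1 * K^1 * Real.exp (K*π/2)) * (1/2) := le_of_eq (by rw [pow_one]; ring)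
        _ ≤ (1 * K^1 * Real.exp (K*π/2)) * Real.sqrt (1-x^2) := by
            refine mul_le_mul_of_nonneg_left hshalf (by positivity)
  | succ m IH =>
    obtain ⟨IH0, IH1⟩ := IH
    refine ⟨IH1, ?_⟩
    intro x hx
    have hx01 : x ∈ Set.Ioo (0:ℝ) 1 := ⟨hx.1, by linarith [hx.2]⟩
    have hode := ode K m x (mem_S_of_mem01 hx01)
    have h34 : (3:ℝ)/4 ≤ 1 - x^2 := by nlinarith [hx.1, hx.2]
    have h1x := sub_sq_pos hx01
    have hb1 := IH1 x hx
    have hb0 := IH0 x hx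
    have hxabs : |x| ≤ 1/2 := by rw [abs_of_pos hx.1]; exact hx.2
    have hcoef1 : (0:ℝ) ≤ 2*(m:ℝ)+1 := by positivity
    have hcoef2 : (0:ℝ) ≤ (m:ℝ)^2 + K^2 := by positivity
    have key : (1-x^2) * |gc K (m+2) x|
        ≤ (2*(m:ℝ)+1) * (1/2) * (Tc (m+1) * K^(m+1) * Real.exp (K*π/2))
          + ((m:ℝ)^2+K^2) * (Tc m * K^m * Real.exp (K*π/2)) := by
      rw [← abs_of_pos h1x, ← abs_mul, hode]
      refine (abs_add_le _ _).trans ?_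
      rw [abs_mul, abs_mul, abs_mul, abs_of_nonneg hcoef1, abs_of_nonneg hcoef2]
      have e1 : (2*(m:ℝ)+1) * |x| * |gc K (m+1) x|
          ≤ (2*(m:ℝ)+1) * (1/2) * (Tc (m+1) * K^(m+1) * Real.exp (K*π/2)) := by
        have := mul_le_mul hxabs hb1 (abs_nonneg _) (by norm_num)
        nlinarith [abs_nonneg (gc K (m+1) x)]
      have e2 : ((m:ℝ)^2+K^2) * |gc K m x|
          ≤ ((m:ℝ)^2+K^2) * (Tc m * K^m * Real.exp (K*π/2)) :=
        mul_le_mul_of_nonneg_left hb0 hcoef2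
      linarith
    have hTc1 := Tc_pos (m+1)
    have hTc0 := Tc_pos m
    have hKpow : K^(m+1) ≤ K^(m+2) := by
      calc K^(m+1) = K^(m+1) * 1 := by ring
      _ ≤ K^(m+1) * K := by exact mul_le_mul_of_nonneg_left hK (by positivity)
      _ = K^(m+2) := by rw [← pow_succ]
    have hKpow2 : K^m * K^2 = K^(m+2) := by rw [← pow_add]
    have hfin : (2*(m:ℝ)+1) * (1/2) * (Tc (m+1) * K^(m+1) * Real.exp (K*π/2))
          + ((m:ℝ)^2+K^2) * (Tc m * K^m * Real.exp (K*π/2))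
        ≤ (3/4) * (Tc (m+2) * K^(m+2) * Real.exp (K*π/2)) := by
      rw [Tc]
      have t1 : (2*(m:ℝ)+1) * (1/2) * (Tc (m+1) * K^(m+1) * Real.exp (K*π/2))
          ≤ (3/4) * ((2*(m:ℝ)+1) * Tc (m+1) * K^(m+2) * Real.exp (K*π/2)) := by
        have hX : (0:ℝ) ≤ (2*(m:ℝ)+1) * Tc (m+1) * Real.exp (K*π/2) := by positivity
        calc (2*(m:ℝ)+1) * (1/2) * (Tc (m+1) * K^(m+1) * Real.exp (K*π/2))
            = (1/2) * (((2*(m:ℝ)+1) * Tc (m+1) * Real.exp (K*π/2)) * K^(m+1)) := by ring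
        _ ≤ (1/2) * (((2*(m:ℝ)+1) * Tc (m+1) * Real.exp (K*π/2)) * K^(m+2)) := by
            exact mul_le_mul_of_nonneg_left (mul_le_mul_of_nonneg_left hKpow hX) (by norm_num)
        _ ≤ (3/4) * ((2*(m:ℝ)+1) * Tc (m+1) * K^(m+2) * Real.exp (K*π/2)) := by
            nlinarith [mul_nonneg hX (pow_nonneg hK0.le (m+2))]
      have t2 : ((m:ℝ)^2+K^2) * (Tc m * K^m * Real.exp (K*π/2))
          ≤ (3/4) * (2*((m:ℝ)^2+1) * Tc m * K^(m+2) * Real.exp (K*π/2)) := by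
        have hK2 : (1:ℝ) ≤ K^2 := by nlinarith
        have hm2 : (m:ℝ)^2+K^2 ≤ (3/2) * ((m:ℝ)^2+1) * K^2 := by
          nlinarith [sq_nonneg (m:ℝ), hK2]
        have h0 : (0:ℝ) ≤ Tc m * K^m * Real.exp (K*π/2) := by positivity
        calc ((m:ℝ)^2+K^2) * (Tc m * K^m * Real.exp (K*π/2))
            ≤ ((3/2) * ((m:ℝ)^2+1) * K^2) * (Tc m * K^m * Real.exp (K*π/2)) :=
              mul_le_mul_of_nonneg_right hm2 h0
        _ = (3/4) * (2*((m:ℝ)^2+1) * Tc m * (K^m * K^2) * Real.exp (K*π/2)) := by ring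
        _ = (3/4) * (2*((m:ℝ)^2+1) * Tc m * K^(m+2) * Real.exp (K*π/2)) := by rw [hKpow2]
      nlinarith [t1, t2]
    have : (3/4) * |gc K (m+2) x| ≤ (1-x^2) * |gc K (m+2) x| :=
      mul_le_mul_of_nonneg_right h34 (abs_nonneg _)
    rw [show m+1+1 = m+2 from rfl]
    nlinarith [key, hfin]
noncomputable def Ec : ℕ → ℝ
  | 0 => 4
  | (m+1) => 2*((m:ℝ)^2+1) * Ec m

lemma Ec_pos : ∀ m, 0 < Ec m := by
  intro m
  induction m with
  | zero => rw [Ec]; norm_num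
  | succ m IH => rw [Ec]; positivity

lemma hasDerivAt_c (j : ℕ) {t : ℝ} (h : (0:ℝ) < 1 - t^2) :
    HasDerivAt (fun y : ℝ => (1-y^2)^(j+1) * Real.sqrt (1-y^2))
      (-(2*(j:ℝ)+3) * t * (1-t^2)^j * Real.sqrt (1-t^2)) t := by
  have hs : (0:ℝ) < Real.sqrt (1-t^2) := Real.sqrt_pos.2 h
  have hs2 : Real.sqrt (1-t^2) ^ 2 = 1-t^2 := Real.sq_sqrt h.le
  have hinner : HasDerivAt (fun y : ℝ => 1 - y^2) (-(2*t^1)) t := by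
    simpa using (hasDerivAt_pow 2 t).const_sub 1
  have hpow : HasDerivAt (fun y : ℝ => (1-y^2)^(j+1))
      ((((j+1):ℕ):ℝ) * (1-t^2)^j * (-(2*t^1))) t := by
    have := hinner.fun_pow (j+1)
    simpa [Nat.add_sub_cancel] using this
  have hsqrt : HasDerivAt (fun y : ℝ => Real.sqrt (1-y^2))
      (1/(2*Real.sqrt (1-t^2)) * (-(2*t^1))) t :=
    (Real.hasDerivAt_sqrt h.ne').comp t hinner
  have hcomb := hpow.fun_mul hsqrt
  refine hcomb.congr_deriv (Eq.symm ?_)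
  push_cast
  field_simp
  linear_combination (-t*(1-t^2)^j) * hs2
lemma hasDerivAt_p (K : ℝ) (j : ℕ) {t : ℝ} (ht : t ∈ Set.Ioo (-1:ℝ) 1) :
    HasDerivAt (fun y : ℝ => (1-y^2)^(j+1) * Real.sqrt (1-y^2) * gc K (j+2) y)
      ((((j:ℝ)+1)^2 + K^2) * ((1-t^2)^j * Real.sqrt (1-t^2) * gc K (j+1) t)) t := by
  have h : (0:ℝ) < 1 - t^2 := by nlinarith [ht.1, ht.2]
  have hp := (hasDerivAt_c j h).fun_mul (hasDerivAt_gc K (j+2) ht)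
  refine hp.congr_deriv (Eq.symm ?_)
  have hode := ode K (j+1) t ht
  push_cast at hode ⊢
  linear_combination (-((1-t^2)^j * Real.sqrt (1-t^2))) * hode
set_option maxHeartbeats 2000000 in
lemma boundR (K : ℝ) (hK : 1 ≤ K) : ∀ j : ℕ, ∀ x ∈ Set.Ico (1/2:ℝ) 1,
    |gc K (j+1) x| ≤ Ec (j+1) * K^(2*(j+1)) * Real.exp (K*π/3) := by
  have hK0 : (0:ℝ) < K := lt_of_lt_of_le one_pos hK
  have hE3 : (0:ℝ) < Real.exp (K*π/3) := Real.exp_pos _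
  intro j
  induction j with
  | zero =>
    intro x hx
    have hx01 : x ∈ Set.Ioo (0:ℝ) 1 := ⟨by linarith [hx.1], hx.2⟩
    obtain ⟨h1, h2, h3⟩ := arccos_facts hx01
    have h1x := sub_sq_pos hx01
    have hs : (0:ℝ) < Real.sqrt (1 - x^2) := Real.sqrt_pos.2 h1x
    have hθ3 : Real.arccos x ≤ π/3 := arccos_le_pi_div_three hx.1
    have hθs : Real.arccos x ≤ 2 * Real.sqrt (1-x^2) := by
      have := theta_le_sin hx01
      nlinarith [Real.pi_le_four, hs]
    rw [abs_gc1 K hK0 hx01, div_le_iff₀ hs]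
    have hsinh : Real.sinh (K * Real.arccos x) ≤ (K * Real.arccos x) * Real.exp (K*π/3) := by
      refine (my_sinh_le_mul_exp (by positivity)).trans ?_
      have : Real.exp (K * Real.arccos x) ≤ Real.exp (K*π/3) := by
        apply Real.exp_le_exp.2; nlinarith
      exact mul_le_mul_of_nonneg_left this (by positivity)
    have c1 : K * Real.sinh (K * Real.arccos x) ≤ K * ((K * Real.arccos x) * Real.exp (K*π/3)) :=
      mul_le_mul_of_nonneg_left hsinh hK0.le
    have c2 : K * ((K * Real.arccos x) * Real.exp (K*π/3))
        ≤ K * ((K * (2 * Real.sqrt (1-x^2))) * Real.exp (K*π/3)) := by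
      gcongr
    have e8 : Ec 1 = 8 := by rw [Ec, Ec]; norm_num
    rw [e8]
    have hKK : K * (K * (2 * Real.sqrt (1-x^2))) = 2 * (K^(2*1) * Real.sqrt (1-x^2)) := by
      rw [pow_mul, pow_one]; ring
    nlinarith [c1, c2, mul_pos (mul_pos (pow_pos hK0 (2*1)) hE3) hs]
  | succ j IH =>
    intro x hx
    have hx01 : x ∈ Set.Ioo (0:ℝ) 1 := ⟨by linarith [hx.1], hx.2⟩
    have hxS := mem_S_of_mem01 hx01
    have h1x := sub_sq_pos hx01
    have hs : (0:ℝ) < Real.sqrt (1 - x^2) := Real.sqrt_pos.2 h1x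
    obtain ⟨D, hD⟩ := crude K hK0 (j+1)
    have hD0 : (0:ℝ) ≤ D := le_trans (by positivity) (hD x hx01)
    -- the auxiliary function and its bound on [x,1)
    set p : ℝ → ℝ := fun y => (1-y^2)^(j+1) * Real.sqrt (1-y^2) * gc K (j+2) y with hp_def
    set M : ℝ := (((j:ℝ)+1)^2 + K^2) *
      ((1-x^2)^j * Real.sqrt (1-x^2) * (Ec (j+1) * K^(2*(j+1)) * Real.exp (K*π/3))) with hM_def
    have hM0 : 0 ≤ M := by
      have := (Ec_pos (j+1)).le
      positivity
    have hMVT : ∀ y ∈ Set.Ico x 1, |p y - p x| ≤ M * (y - x) := by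
      intro y hy
      have := Convex.norm_image_sub_le_of_norm_hasDerivWithin_le
        (f := p) (s := Set.Ico x 1) (C := M)
        (f' := fun t => (((j:ℝ)+1)^2 + K^2) * ((1-t^2)^j * Real.sqrt (1-t^2) * gc K (j+1) t))
        (fun t ht => (hasDerivAt_p K j ⟨by linarith [hx.1, ht.1], ht.2⟩).hasDerivWithinAt)
        (fun t ht => ?_) (convex_Ico x 1) (Set.left_mem_Ico.2 hx.2) hy
      · rw [Real.norm_eq_abs, Real.norm_eq_abs] at this
        refine this.trans (le_of_eq ?_)
        rw [abs_of_nonneg (by linarith [hy.1])]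
      · -- bound on the derivative
        have ht1 : t < 1 := ht.2
        have htx : x ≤ t := ht.1
        have ht0 : 0 < t := by linarith [hx.1]
        have h1t : (0:ℝ) ≤ 1 - t^2 := by nlinarith
        have hle : 1 - t^2 ≤ 1 - x^2 := by nlinarith [hx.1]
        have e1 : (1-t^2)^j ≤ (1-x^2)^j := pow_le_pow_left₀ h1t hle j
        have e2 : Real.sqrt (1-t^2) ≤ Real.sqrt (1-x^2) := Real.sqrt_le_sqrt hle
        have e3 : |gc K (j+1) t| ≤ Ec (j+1) * K^(2*(j+1)) * Real.exp (K*π/3) :=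
          IH t ⟨le_trans hx.1 htx, ht1⟩
        rw [Real.norm_eq_abs, abs_mul, abs_mul, abs_mul,
          abs_of_nonneg (by positivity : (0:ℝ) ≤ ((j:ℝ)+1)^2 + K^2),
          abs_of_nonneg (pow_nonneg h1t j), abs_of_nonneg (Real.sqrt_nonneg _), hM_def]
        refine mul_le_mul_of_nonneg_left ?_ (by positivity)
        refine mul_le_mul (mul_le_mul e1 e2 (Real.sqrt_nonneg _) (by positivity)) e3
          (abs_nonneg _) (by positivity)
    -- p y → 0 as y → 1⁻
    have htend : Filter.Tendsto (fun y : ℝ => Real.sqrt (1-y^2) * D) (𝓝[<] (1:ℝ)) (𝓝 0) := by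
      have hcont : Continuous (fun y : ℝ => Real.sqrt (1-y^2)) :=
        (continuous_const.sub (continuous_pow 2)).sqrt
      have h10 : Filter.Tendsto (fun y : ℝ => Real.sqrt (1-y^2)) (𝓝 (1:ℝ)) (𝓝 0) := by
        have := hcont.tendsto 1
        simpa using this
      have h10' : Filter.Tendsto (fun y : ℝ => Real.sqrt (1-y^2)) (𝓝[<] (1:ℝ)) (𝓝 0) :=
        h10.mono_left nhdsWithin_le_nhds
      simpa using h10'.mul_const D
    have hptail : ∀ y ∈ Set.Ioo x 1, |p y| ≤ Real.sqrt (1-y^2) * D := by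
      intro y hy
      have hy01 : y ∈ Set.Ioo (0:ℝ) 1 := ⟨by linarith [hx.1, hy.1], hy.2⟩
      have h1y : (0:ℝ) < 1 - y^2 := sub_sq_pos hy01
      have := hD y hy01
      rw [hp_def]
      simp only []
      rw [abs_mul, abs_mul, abs_of_nonneg (pow_nonneg h1y.le (j+1)),
        abs_of_nonneg (Real.sqrt_nonneg _)]
      calc (1-y^2)^(j+1) * Real.sqrt (1-y^2) * |gc K (j+2) y|
          = Real.sqrt (1-y^2) * ((1-y^2)^(j+1) * |gc K (j+2) y|) := by ring
      _ ≤ Real.sqrt (1-y^2) * D := mul_le_mul_of_nonneg_left this (Real.sqrt_nonneg _)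
    have hclaim : |p x| ≤ M * (1-x) := by
      have hev : ∀ᶠ y in 𝓝[<] (1:ℝ), |p x| - M*(1-x) ≤ Real.sqrt (1-y^2) * D := by
        filter_upwards [Ioo_mem_nhdsLT_of_mem (show (1:ℝ) ∈ Set.Ioc x 1 from ⟨hx.2, le_refl _⟩)]
          with y hy
        have h1 := hMVT y ⟨hy.1.le, hy.2⟩
        have h2 := hptail y hy
        have h3 : |p x| - |p y| ≤ |p y - p x| := by
          have := abs_sub_abs_le_abs_sub (p x) (p y)
          rw [abs_sub_comm] at this
          linarith
        have h4 : M * (y - x) ≤ M * (1-x) := mul_le_mul_of_nonneg_left (by linarith [hy.2]) hM0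
        linarith
      have := ge_of_tendsto htend hev
      linarith
    -- convert |p x| ≤ M (1-x) to the bound on gc (j+2)
    have hpx : |p x| = (1-x^2)^(j+1) * Real.sqrt (1-x^2) * |gc K (j+2) x| := by
      rw [hp_def]
      simp only []
      rw [abs_mul, abs_mul, abs_of_nonneg (pow_nonneg h1x.le (j+1)),
        abs_of_nonneg (Real.sqrt_nonneg _)]
    have hC0 : (0:ℝ) < (1-x^2)^j * Real.sqrt (1-x^2) * (1-x) := by
      have : (0:ℝ) < 1 - x := by linarith [hx.2]
      positivity
    have hmain : (1+x) * |gc K (j+2) x|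
        ≤ (((j:ℝ)+1)^2 + K^2) * (Ec (j+1) * K^(2*(j+1)) * Real.exp (K*π/3)) := by
      refine le_of_mul_le_mul_left ?_ hC0
      calc ((1-x^2)^j * Real.sqrt (1-x^2) * (1-x)) * ((1+x) * |gc K (j+2) x|)
          = (1-x^2)^(j+1) * Real.sqrt (1-x^2) * |gc K (j+2) x| := by ring
      _ = |p x| := hpx.symm
      _ ≤ M * (1-x) := hclaim
      _ = ((1-x^2)^j * Real.sqrt (1-x^2) * (1-x)) *
          ((((j:ℝ)+1)^2 + K^2) * (Ec (j+1) * K^(2*(j+1)) * Real.exp (K*π/3))) := by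
          rw [hM_def]; ring
    have habs2 : |gc K (j+2) x| ≤ (1+x) * |gc K (j+2) x| := by
      nlinarith [abs_nonneg (gc K (j+2) x), hx.1]
    have hfinal : (((j:ℝ)+1)^2 + K^2) * (Ec (j+1) * K^(2*(j+1)) * Real.exp (K*π/3))
        ≤ Ec (j+2) * K^(2*(j+2)) * Real.exp (K*π/3) := by
      have hK2 : (1:ℝ) ≤ K^2 := by nlinarith
      have hcoef : ((j:ℝ)+1)^2 + K^2 ≤ (((j:ℝ)+1)^2 + 1) * K^2 := by
        nlinarith [sq_nonneg ((j:ℝ)+1)]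
      have hEc2 : Ec (j+2) = 2*((((j+1):ℕ):ℝ)^2+1) * Ec (j+1) := by rw [Ec]
      have hpow : K^(2*(j+1)) * K^2 = K^(2*(j+2)) := by ring
      calc (((j:ℝ)+1)^2 + K^2) * (Ec (j+1) * K^(2*(j+1)) * Real.exp (K*π/3))
          ≤ ((((j:ℝ)+1)^2 + 1) * K^2) * (Ec (j+1) * K^(2*(j+1)) * Real.exp (K*π/3)) := by
            refine mul_le_mul_of_nonneg_right hcoef ?_
            have := (Ec_pos (j+1)).le
            positivity
        _ = (((j:ℝ)+1)^2 + 1) * Ec (j+1) * (K^(2*(j+1)) * K^2) * Real.exp (K*π/3) := by ring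
        _ = (((j:ℝ)+1)^2 + 1) * Ec (j+1) * K^(2*(j+2)) * Real.exp (K*π/3) := by rw [hpow]
        _ ≤ Ec (j+2) * K^(2*(j+2)) * Real.exp (K*π/3) := by
            rw [hEc2]
            push_cast
            have h1 := (Ec_pos (j+1)).le
            have hX : (0:ℝ) ≤ (((j:ℝ)+1)^2 + 1) * Ec (j+1) * K^(2*(j+2)) * Real.exp (K*π/3) := by
              positivity
            linarith
    calc |gc K (j+1+1) x| ≤ (1+x) * |gc K (j+2) x| := habs2
      _ ≤ (((j:ℝ)+1)^2 + K^2) * (Ec (j+1) * K^(2*(j+1)) * Real.exp (K*π/3)) := hmain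
      _ ≤ Ec (j+2) * K^(2*(j+2)) * Real.exp (K*π/3) := hfinal
lemma absorb (n : ℕ) (K : ℝ) (hK : 1 ≤ K) :
    K^(2*n) * Real.exp (K*π/3)
      ≤ ((n.factorial : ℝ) * 2^n) * (K^n * Real.exp (K*π/2)) := by
  have hK0 : (0:ℝ) < K := lt_of_lt_of_le one_pos hK
  have hπ := Real.pi_pos
  have hu : (0:ℝ) ≤ K*π/6 := by positivity
  have hf : (0:ℝ) < (n.factorial : ℝ) := by exact_mod_cast n.factorial_pos
  have h1 : (K*π/6)^n / (n.factorial : ℝ) ≤ Real.exp (K*π/6) := by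
    refine le_trans ?_ (Real.sum_le_exp_of_nonneg hu (n+1))
    exact Finset.single_le_sum (f := fun i => (K*π/6)^i / (i.factorial : ℝ))
      (fun i _ => by positivity) (Finset.self_mem_range_succ n)
  have h2 : K^n ≤ (n.factorial : ℝ) * 2^n * Real.exp (K*π/6) := by
    have hπ3 : (3:ℝ) < π := Real.pi_gt_three
    have h6 : K ≤ 2 * (K*π/6) := by nlinarith
    calc K^n ≤ (2*(K*π/6))^n := pow_le_pow_left₀ hK0.le h6 n
      _ = 2^n * (K*π/6)^n := by rw [mul_pow]
      _ ≤ 2^n * ((n.factorial : ℝ) * Real.exp (K*π/6)) := by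
          refine mul_le_mul_of_nonneg_left ?_ (by positivity)
          rw [div_le_iff₀ hf] at h1
          linarith
      _ = (n.factorial : ℝ) * 2^n * Real.exp (K*π/6) := by ring
  calc K^(2*n) * Real.exp (K*π/3) = K^n * K^n * Real.exp (K*π/3) := by
        rw [two_mul, pow_add]
    _ ≤ K^n * ((n.factorial : ℝ) * 2^n * Real.exp (K*π/6)) * Real.exp (K*π/3) :=
        mul_le_mul_of_nonneg_right
          (mul_le_mul_of_nonneg_left h2 (pow_nonneg hK0.le n)) (Real.exp_pos _).le
    _ = ((n.factorial : ℝ) * 2^n) * (K^n * (Real.exp (K*π/6) * Real.exp (K*π/3))) := by ring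
    _ = ((n.factorial : ℝ) * 2^n) * (K^n * Real.exp (K*π/2)) := by
        rw [← Real.exp_add]
        congr 2
        ring

/-- Lemma `l.1-new`: for each `n ≥ 1` there is `Cₙ < ∞` such that for
every `K ≥ 1` and `x ∈ (0,1)`: `|dⁿ/dxⁿ cosh(K·arccos x)| ≤ Cₙ Kⁿ e^{Kπ/2}`. -/
theorem statement17 (n : ℕ) (hn : 1 ≤ n) :
    ∃ C : ℝ, ∀ K : ℝ, 1 ≤ K → ∀ x ∈ Set.Ioo (0 : ℝ) 1,
      |iteratedDeriv n (fun x : ℝ => Real.cosh (K * Real.arccos x)) x| ≤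
        C * K ^ n * Real.exp (K * π / 2) := by
  refine ⟨Tc n + Ec n * ((n.factorial : ℝ) * 2^n), fun K hK x hx => ?_⟩
  have hK0 : (0:ℝ) < K := lt_of_lt_of_le one_pos hK
  have hE : (0:ℝ) < Real.exp (K * π / 2) := Real.exp_pos _
  have hKn : (0:ℝ) < K^n := pow_pos hK0 n
  have hTn := (Tc_pos n).le
  have hEn := (Ec_pos n).le
  have hfn : (0:ℝ) < (n.factorial : ℝ) := by exact_mod_cast n.factorial_pos
  have hg : iteratedDeriv n (fun x : ℝ => Real.cosh (K * Real.arccos x)) x = gc K n x := rfl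
  rw [hg]
  have hexp_eq : Real.exp (K*π/2) = Real.exp (K * π / 2) := by norm_num
  rcases le_or_gt x (1/2 : ℝ) with hcase | hcase
  · have hb := boundL n K hK x ⟨hx.1, hcase⟩
    rw [hexp_eq] at hb
    have hextra : (0:ℝ) ≤ Ec n * ((n.factorial : ℝ) * 2^n) * (K^n * Real.exp (K * π / 2)) := by
      positivity
    nlinarith [hb]
  · have hx' : x ∈ Set.Ico (1/2:ℝ) 1 := ⟨hcase.le, hx.2⟩
    obtain ⟨j, rfl⟩ : ∃ j, n = j+1 := ⟨n-1, by omega⟩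
    have h1 := boundR K hK j x hx'
    have h2 := absorb (j+1) K hK
    have h3 : Ec (j+1) * K^(2*(j+1)) * Real.exp (K*π/3)
        ≤ Ec (j+1) * (((j+1).factorial : ℝ) * 2^(j+1)) * (K^(j+1) * Real.exp (K*π/2)) := by
      calc Ec (j+1) * K^(2*(j+1)) * Real.exp (K*π/3)
          = Ec (j+1) * (K^(2*(j+1)) * Real.exp (K*π/3)) := by ring
        _ ≤ Ec (j+1) * ((((j+1).factorial : ℝ) * 2^(j+1)) * (K^(j+1) * Real.exp (K*π/2))) :=
            mul_le_mul_of_nonneg_left h2 (Ec_pos (j+1)).le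
        _ = Ec (j+1) * (((j+1).factorial : ℝ) * 2^(j+1)) * (K^(j+1) * Real.exp (K*π/2)) := by
            ring
    have h4 := h1.trans h3
    rw [hexp_eq] at h4
    have hextra : (0:ℝ) ≤ Tc (j+1) * (K^(j+1) * Real.exp (K * π / 2)) := by
      have := (Tc_pos (j+1)).le
      positivity
    nlinarith [h4]
end

section
/- For each integer n ≥ 1 there exists a constant Cₙ < ∞ such that for every real K ≥ 1 and every x ∈ (0,1): |dⁿ/dxⁿ (sinh(K·arccos x)/arccos x)| ≤ Cₙ·K^{n+1}·e^{Kπ/2}. -/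
open Real Filter Set Topology Nat

/-! ### Auxiliary elementary estimates -/

lemma st18_pow_le_factorial_mul_exp (y : ℝ) (hy : 0 ≤ y) (j : ℕ) :
    y ^ j ≤ (j ! : ℝ) * Real.exp y := by
  have h1 : y ^ j / (j ! : ℝ) ≤ Real.exp y := by
    calc y ^ j / (j ! : ℝ) ≤ ∑ i ∈ Finset.range (j + 1), y ^ i / (i ! : ℝ) :=
          Finset.single_le_sum (f := fun i => y ^ i / (i ! : ℝ))
            (fun i _ => by positivity) (Finset.self_mem_range_succ j)
      _ ≤ Real.exp y := Real.sum_le_exp_of_nonneg hy _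
  have hj : (0:ℝ) < (j ! : ℝ) := by positivity
  calc y ^ j = y ^ j / (j ! : ℝ) * (j ! : ℝ) := by field_simp
    _ ≤ Real.exp y * (j ! : ℝ) := by gcongr
    _ = (j ! : ℝ) * Real.exp y := mul_comm _ _

lemma st18_exp_eq_tsum (y : ℝ) : Real.exp y = ∑' l : ℕ, y ^ l / (l ! : ℝ) := by
  rw [Real.exp_eq_exp_ℝ, NormedSpace.exp_eq_tsum_div]

lemma st18_summable_core (N : ℕ) {z : ℝ} (hz : 0 ≤ z) :
    Summable (fun m : ℕ => ((m : ℝ) + 1) ^ N * z ^ m / (m ! : ℝ)) := by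
  have h2 : Summable (fun m : ℕ => ((m : ℝ)) ^ N * (1/2 : ℝ) ^ m) :=
    summable_pow_mul_geometric_of_norm_lt_one N (by norm_num)
  have h3 : Summable (fun m : ℕ => ((m : ℝ) + 1) ^ N * (1/2 : ℝ) ^ (m + 1)) := by
    have h := (summable_nat_add_iff (f := fun m : ℕ => ((m : ℝ)) ^ N * (1/2 : ℝ) ^ m) 1).2 h2
    refine h.congr fun m => ?_
    push_cast
    ring
  have h4 : Summable (fun m : ℕ => ((m : ℝ) + 1) ^ N * (1/2 : ℝ) ^ m) := by
    have h := h3.mul_left 2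
    refine h.congr fun m => ?_
    rw [pow_succ]
    ring
  refine Summable.of_nonneg_of_le (fun m => by positivity) (fun m => ?_)
    (h4.mul_left (Real.exp (2 * z)))
  have key : z ^ m / (m ! : ℝ) ≤ Real.exp (2 * z) * (1/2) ^ m := by
    have h := st18_pow_le_factorial_mul_exp (2 * z) (by positivity) m
    rw [mul_pow] at h
    rw [div_pow, one_pow, mul_one_div]
    rw [div_le_div_iff₀ (by positivity) (by positivity)]
    calc z ^ m * 2 ^ m = 2 ^ m * z ^ m := by ring
      _ ≤ (m ! : ℝ) * Real.exp (2 * z) := h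
      _ = Real.exp (2 * z) * (m ! : ℝ) := by ring
  calc ((m : ℝ) + 1) ^ N * z ^ m / (m ! : ℝ) = ((m : ℝ) + 1) ^ N * (z ^ m / (m ! : ℝ)) := by ring
    _ ≤ ((m : ℝ) + 1) ^ N * (Real.exp (2 * z) * (1/2) ^ m) := by
        have : (0:ℝ) ≤ ((m : ℝ) + 1) ^ N := by positivity
        exact mul_le_mul_of_nonneg_left key this
    _ = Real.exp (2 * z) * (((m : ℝ) + 1) ^ N * (1/2) ^ m) := by ring

/-! ### iterated derivatives of `z ↦ c * z ^ m` -/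

lemma st18_iteratedDeriv_const_mul_pow (c : ℝ) (m : ℕ) :
    ∀ i : ℕ, iteratedDeriv i (fun z : ℝ => c * z ^ m) =
      fun z => c * ((m.descFactorial i : ℝ) * z ^ (m - i))
  | 0 => by
      funext z
      simp [iteratedDeriv_zero]
  | (i + 1) => by
      rw [iteratedDeriv_succ, st18_iteratedDeriv_const_mul_pow c m i]
      funext z
      have h1 : deriv (fun z : ℝ => c * ((m.descFactorial i : ℝ) * z ^ (m - i))) z
          = c * ((m.descFactorial i : ℝ) * (((m - i : ℕ) : ℝ) * z ^ (m - i - 1))) := by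
        have hd : DifferentiableAt ℝ (fun z : ℝ => z ^ (m - i)) z := differentiableAt_pow _
        rw [show (fun z : ℝ => c * ((m.descFactorial i : ℝ) * z ^ (m - i)))
            = fun z : ℝ => (c * (m.descFactorial i : ℝ)) * z ^ (m - i) by funext w; ring]
        rw [deriv_const_mul_field, deriv_pow_field]
        ring
      rw [h1, Nat.descFactorial_succ]
      have h2 : m - i - 1 = m - (i + 1) := by omega
      rw [h2]
      push_cast
      ring

/-- Outer-function derivative bounds for `z ↦ c * z^m` at a point `w` with `|w| ≤ R`. -/
lemma st18_outer_bound {R : ℝ} (hR : 1 ≤ R) {w : ℝ} (hw : |w| ≤ R)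
    (c : ℝ) (m i N : ℕ) (hi : i ≤ N) :
    ‖iteratedFDeriv ℝ i (fun z : ℝ => c * z ^ m) w‖ ≤ |c| * (((m : ℝ) + 1) ^ N * R ^ m) := by
  rw [norm_iteratedFDeriv_eq_norm_iteratedDeriv, st18_iteratedDeriv_const_mul_pow c m i,
    Real.norm_eq_abs]
  have h0 : (0:ℝ) ≤ (m:ℝ) := Nat.cast_nonneg m
  have h1 : |(m.descFactorial i : ℝ)| ≤ ((m : ℝ) + 1) ^ N := by
    rw [abs_of_nonneg (Nat.cast_nonneg _)]
    calc (m.descFactorial i : ℝ) ≤ ((m : ℝ)) ^ i := by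
          exact_mod_cast Nat.descFactorial_le_pow m i
      _ ≤ ((m : ℝ) + 1) ^ i := by gcongr; linarith
      _ ≤ ((m : ℝ) + 1) ^ N := by
          apply pow_le_pow_right₀ (by linarith) hi
  have h2 : |w ^ (m - i)| ≤ R ^ m := by
    rw [abs_pow]
    calc |w| ^ (m - i) ≤ R ^ (m - i) := by gcongr
      _ ≤ R ^ m := pow_le_pow_right₀ hR (Nat.sub_le m i)
  calc |c * ((m.descFactorial i : ℝ) * w ^ (m - i))|
      = |c| * (|(m.descFactorial i : ℝ)| * |w ^ (m - i)|) := by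
        rw [abs_mul, abs_mul]
    _ ≤ |c| * (((m : ℝ) + 1) ^ N * R ^ m) := by
        apply mul_le_mul_of_nonneg_left _ (abs_nonneg c)
        exact mul_le_mul h1 h2 (abs_nonneg _) (by positivity)

/-- Bound for iterated derivatives of `y ↦ c * Q y ^ m`. -/
lemma st18_term_bound {Nn : ℕ} {Q : ℝ → ℝ} (hQ : ContDiff ℝ (Nn : ℕ∞) Q)
    {D : ℝ} (hD : 1 ≤ D) (hDb : ∀ j, 1 ≤ j → j ≤ Nn → ∀ x, ‖iteratedFDeriv ℝ j Q x‖ ≤ D ^ j)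
    {R : ℝ} (hR : 1 ≤ R) {x : ℝ} (hx : |Q x| ≤ R) (c : ℝ) (m k : ℕ) (hk : k ≤ Nn) :
    ‖iteratedFDeriv ℝ k (fun y => c * Q y ^ m) x‖ ≤
      (Nn ! : ℝ) * (|c| * (((m : ℝ) + 1) ^ Nn * R ^ m)) * D ^ Nn := by
  have hg : ContDiff ℝ (Nn : ℕ∞) (fun z : ℝ => c * z ^ m) :=
    contDiff_const.mul (contDiff_id.pow m)
  have hcomp : (fun y => c * Q y ^ m) = (fun z : ℝ => c * z ^ m) ∘ Q := rfl
  rw [hcomp]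
  have hmain := norm_iteratedFDeriv_comp_le hg hQ (by exact_mod_cast hk) x
    (C := |c| * (((m : ℝ) + 1) ^ Nn * R ^ m)) (D := D)
    (fun i hi => st18_outer_bound hR hx c m i Nn (le_trans hi hk))
    (fun i hi1 hi2 => hDb i hi1 (le_trans hi2 hk) x)
  refine le_trans hmain ?_
  have hC : (0:ℝ) ≤ |c| * (((m : ℝ) + 1) ^ Nn * R ^ m) := by positivity
  have h1 : (k ! : ℝ) ≤ (Nn ! : ℝ) := by exact_mod_cast Nat.factorial_le hk
  have h2 : D ^ k ≤ D ^ Nn := pow_le_pow_right₀ hD hk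
  apply mul_le_mul (mul_le_mul_of_nonneg_right h1 hC) h2 (by positivity) (by positivity)

/-- Global derivative bounds for a compactly supported `C^N` function. -/
lemma st18_derivBounds {Nn : ℕ} {Q : ℝ → ℝ} (hQ : ContDiff ℝ (Nn : ℕ∞) Q)
    (hQc : HasCompactSupport Q) :
    ∃ D : ℝ, 1 ≤ D ∧ ∀ j, 1 ≤ j → j ≤ Nn → ∀ x, ‖iteratedFDeriv ℝ j Q x‖ ≤ D ^ j := by
  have H : ∀ j : ℕ, ∃ B : ℝ, j ≤ Nn → ∀ x, ‖iteratedFDeriv ℝ j Q x‖ ≤ B := by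
    intro j
    by_cases hj : j ≤ Nn
    · obtain ⟨B, hB⟩ := (hQc.iteratedFDeriv j).exists_bound_of_continuous
        (hQ.continuous_iteratedFDeriv (by exact_mod_cast hj))
      exact ⟨B, fun _ => hB⟩
    · exact ⟨0, fun h => absurd h hj⟩
  choose B hB using H
  have hsum0 : (0:ℝ) ≤ ∑ i ∈ Finset.range (Nn + 1), |B i| :=
    Finset.sum_nonneg (fun i _ => abs_nonneg _)
  refine ⟨1 + ∑ j ∈ Finset.range (Nn + 1), |B j|, by linarith, fun j hj1 hj2 x => ?_⟩
  have h1 : ‖iteratedFDeriv ℝ j Q x‖ ≤ B j := hB j hj2 x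
  have h2 : B j ≤ ∑ i ∈ Finset.range (Nn + 1), |B i| := by
    calc B j ≤ |B j| := le_abs_self _
      _ ≤ ∑ i ∈ Finset.range (Nn + 1), |B i| :=
        Finset.single_le_sum (fun i _ => abs_nonneg (B i))
          (Finset.mem_range.2 (by omega))
  have hD1 : (1:ℝ) ≤ 1 + ∑ i ∈ Finset.range (Nn + 1), |B i| := by linarith
  calc ‖iteratedFDeriv ℝ j Q x‖ ≤ B j := h1
    _ ≤ 1 + ∑ i ∈ Finset.range (Nn + 1), |B i| := by linarith
    _ ≤ (1 + ∑ i ∈ Finset.range (Nn + 1), |B i|) ^ j :=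
        le_self_pow₀ hD1 (by omega)

/-- The central numeric series estimate. -/
lemma st18_sum_est {Nn : ℕ} (hN : 1 ≤ Nn) {K : ℝ} (hK : 1 ≤ K) :
    ∑' m : ℕ, K ^ (2*m+1) * (((m:ℝ) + 1) ^ Nn * (π^2/4) ^ m) / ((2*m+1)! : ℝ) ≤
      ((Nn:ℝ) * (Nn:ℝ) ^ Nn * ((2*Nn)! : ℝ) + 1) * (π/2) ^ (Nn-1) * K ^ Nn *
        Real.exp (K * π / 2) := by
  have hpi : (3:ℝ) < π := Real.pi_gt_three
  set b : ℝ := K * π / 2 with hbdef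
  have hb1 : (1:ℝ) ≤ b := by
    have h : (1:ℝ) * 1 ≤ K * (π/2) :=
      mul_le_mul hK (by linarith) (by norm_num) (by linarith)
    calc (1:ℝ) = 1 * 1 := by norm_num
      _ ≤ K * (π/2) := h
      _ = b := by rw [hbdef]; ring
  have hb0 : (0:ℝ) ≤ b := by linarith
  set s : ℕ → ℝ := fun m => ((m:ℝ) + 1) ^ Nn * b ^ (2*m) / ((2*m+1)! : ℝ) with hsdef
  have hsnn : ∀ m, 0 ≤ s m := fun m => by rw [hsdef]; positivity
  have hterm : ∀ m : ℕ, K ^ (2*m+1) * (((m:ℝ) + 1) ^ Nn * (π^2/4) ^ m) / ((2*m+1)! : ℝ)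
      = K * s m := by
    intro m
    rw [hsdef]
    simp only []
    have hb2 : b ^ (2*m) = K ^ (2*m) * (π^2/4) ^ m := by
      rw [hbdef, pow_mul, pow_mul]
      ring
    rw [hb2]
    ring
  have hs : Summable s := by
    apply Summable.of_nonneg_of_le hsnn (fun m => ?_)
      (st18_summable_core Nn (z := b^2) (by positivity))
    rw [hsdef]
    simp only []
    rw [show b ^ (2*m) = (b^2) ^ m by rw [← pow_mul]]
    gcongr
    case _ => omega
  have hb2m : ∀ m, m < Nn → b ^ (2*m) ≤ b ^ (Nn-1) * (((2*Nn)! : ℝ) * Real.exp b) := by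
    intro m hm
    have hfac1 : (1:ℝ) ≤ ((2*Nn)! : ℝ) := by exact_mod_cast Nat.one_le_iff_ne_zero.2 (2*Nn).factorial_ne_zero
    have hexp1 : (1:ℝ) ≤ Real.exp b := Real.one_le_exp hb0
    rcases le_or_gt (2*m) (Nn-1) with h | h
    · calc b ^ (2*m) ≤ b ^ (Nn-1) := pow_le_pow_right₀ hb1 h
        _ = b ^ (Nn-1) * 1 := by ring
        _ ≤ b ^ (Nn-1) * (((2*Nn)! : ℝ) * Real.exp b) := by
            apply mul_le_mul_of_nonneg_left _ (by positivity)
            nlinarith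
    · have hj : (Nn-1) + (2*m - (Nn-1)) = 2*m := by omega
      calc b ^ (2*m) = b ^ (Nn-1) * b ^ (2*m - (Nn-1)) := by rw [← pow_add, hj]
        _ ≤ b ^ (Nn-1) * (((2*m - (Nn-1))! : ℝ) * Real.exp b) :=
            mul_le_mul_of_nonneg_left (st18_pow_le_factorial_mul_exp b hb0 _) (by positivity)
        _ ≤ b ^ (Nn-1) * (((2*Nn)! : ℝ) * Real.exp b) := by
            apply mul_le_mul_of_nonneg_left _ (by positivity)
            apply mul_le_mul_of_nonneg_right _ (le_of_lt (Real.exp_pos b))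
            exact_mod_cast Nat.factorial_le (by omega)
  have hhead : ∀ m ∈ Finset.range Nn, s m ≤ (Nn:ℝ)^Nn * (b^(Nn-1) * (((2*Nn)! : ℝ) * Real.exp b)) := by
    intro m hm
    have hmN : m < Nn := Finset.mem_range.1 hm
    have h1 : s m ≤ ((m:ℝ)+1)^Nn * b^(2*m) := by
      rw [hsdef]
      simp only []
      apply _root_.div_le_self (by positivity)
      exact_mod_cast Nat.one_le_iff_ne_zero.2 (2*m+1).factorial_ne_zero
    have h2 : ((m:ℝ)+1)^Nn ≤ (Nn:ℝ)^Nn := by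
      have hmn : ((m:ℝ)+1) ≤ (Nn:ℝ) := by exact_mod_cast hmN
      exact pow_le_pow_left₀ (by positivity) hmn Nn
    calc s m ≤ ((m:ℝ)+1)^Nn * b^(2*m) := h1
      _ ≤ (Nn:ℝ)^Nn * (b^(Nn-1) * (((2*Nn)! : ℝ) * Real.exp b)) :=
          mul_le_mul h2 (hb2m m hmN) (by positivity) (by positivity)
  have hheadsum : ∑ m ∈ Finset.range Nn, s m
      ≤ (Nn:ℝ) * ((Nn:ℝ)^Nn * (b^(Nn-1) * (((2*Nn)! : ℝ) * Real.exp b))) := by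
    have h := Finset.sum_le_card_nsmul (Finset.range Nn) s _ hhead
    simpa [Finset.card_range, nsmul_eq_mul] using h
  have hinj : Function.Injective (fun i : ℕ => 2*i + Nn + 1) := by
    intro a b h
    simp only [] at h
    omega
  have hg : Summable (fun i : ℕ => b ^ (2*i + Nn + 1) / ((2*i + Nn + 1)! : ℝ)) :=
    (Real.summable_pow_div_factorial b).comp_injective hinj
  have htailterm : ∀ i : ℕ, s (i + Nn) ≤ b^(Nn-1) * (b ^ (2*i + Nn + 1) / ((2*i + Nn + 1)! : ℝ)) := by
    intro i
    have hnat : (i + Nn + 1)^Nn * (2*(i + Nn) + 1 - Nn)! ≤ (2*(i + Nn) + 1)! := by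
      have hd : (i + Nn + 1)^Nn ≤ (2*(i + Nn) + 1).descFactorial Nn := by
        calc (i + Nn + 1)^Nn ≤ (2*(i + Nn) + 1 + 1 - Nn)^Nn := Nat.pow_le_pow_left (by omega) _
          _ ≤ (2*(i + Nn) + 1).descFactorial Nn := Nat.pow_sub_le_descFactorial _ _
      calc (i + Nn + 1)^Nn * (2*(i + Nn) + 1 - Nn)!
          ≤ (2*(i + Nn) + 1).descFactorial Nn * (2*(i + Nn) + 1 - Nn)! :=
            Nat.mul_le_mul_right _ hd
        _ = (2*(i + Nn) + 1)! := by
            rw [Nat.mul_comm]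
            exact Nat.factorial_mul_descFactorial (by omega)
    have hreal : (((i:ℝ) + Nn) + 1)^Nn * ((2*(i + Nn) + 1 - Nn)! : ℝ) ≤ ((2*(i + Nn) + 1)! : ℝ) := by
      have h2 : ((i + Nn + 1 : ℕ) : ℝ)^Nn * ((2*(i + Nn) + 1 - Nn)! : ℝ) ≤ ((2*(i + Nn) + 1)! : ℝ) := by
        exact_mod_cast hnat
      convert h2 using 2
      push_cast
      ring
    have hstep : s (i + Nn) ≤ b ^ (2*(i + Nn)) / ((2*(i + Nn) + 1 - Nn)! : ℝ) := by
      rw [hsdef]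
      simp only []
      rw [div_le_div_iff₀ (by positivity) (by positivity)]
      push_cast
      calc ((i:ℝ) + (Nn:ℝ) + 1)^Nn * b^(2*(i + Nn)) * ((2*(i + Nn) + 1 - Nn)! : ℝ)
          = b^(2*(i + Nn)) * ((((i:ℝ) + Nn) + 1)^Nn * ((2*(i + Nn) + 1 - Nn)! : ℝ)) := by ring
        _ ≤ b^(2*(i + Nn)) * ((2*(i + Nn) + 1)! : ℝ) :=
            mul_le_mul_of_nonneg_left hreal (by positivity)
    have hfa : 2*(i + Nn) + 1 - Nn = 2*i + Nn + 1 := by omega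
    have hexp2 : 2*(i + Nn) = (Nn-1) + (2*i + Nn + 1) := by omega
    calc s (i + Nn) ≤ b ^ (2*(i + Nn)) / ((2*(i + Nn) + 1 - Nn)! : ℝ) := hstep
      _ = b^(Nn-1) * (b ^ (2*i + Nn + 1) / ((2*i + Nn + 1)! : ℝ)) := by
          rw [hfa, hexp2, pow_add]
          ring
  have htail_summ : Summable (fun i => s (i + Nn)) := (summable_nat_add_iff Nn).2 hs
  have hcmp : ∑' i : ℕ, b ^ (2*i + Nn + 1) / ((2*i + Nn + 1)! : ℝ) ≤ Real.exp b := by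
    rw [st18_exp_eq_tsum]
    exact Summable.tsum_le_tsum_of_inj _ hinj (fun c _ => by positivity) (fun i => le_refl _)
      hg (Real.summable_pow_div_factorial b)
  have htailsum : ∑' i : ℕ, s (i + Nn) ≤ b^(Nn-1) * Real.exp b := by
    calc ∑' i : ℕ, s (i + Nn)
        ≤ ∑' i : ℕ, b^(Nn-1) * (b ^ (2*i + Nn + 1) / ((2*i + Nn + 1)! : ℝ)) :=
          Summable.tsum_le_tsum htailterm htail_summ (hg.mul_left _)
      _ = b^(Nn-1) * ∑' i : ℕ, b ^ (2*i + Nn + 1) / ((2*i + Nn + 1)! : ℝ) := tsum_mul_left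
      _ ≤ b^(Nn-1) * Real.exp b := mul_le_mul_of_nonneg_left hcmp (by positivity)
  have hKpow : K * K^(Nn-1) = K^Nn := by
    calc K * K^(Nn-1) = K^(Nn-1) * K := mul_comm _ _
      _ = K^((Nn-1)+1) := (pow_succ K (Nn-1)).symm
      _ = K^Nn := by congr 1; omega
  have hb' : b ^ (Nn-1) = K^(Nn-1) * (π/2)^(Nn-1) := by
    rw [show b = K * (π/2) by rw [hbdef]; ring, mul_pow]
  calc ∑' m : ℕ, K ^ (2*m+1) * (((m:ℝ) + 1) ^ Nn * (π^2/4) ^ m) / ((2*m+1)! : ℝ)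
      = ∑' m : ℕ, K * s m := tsum_congr hterm
    _ = K * ∑' m : ℕ, s m := tsum_mul_left
    _ = K * (∑ m ∈ Finset.range Nn, s m + ∑' i : ℕ, s (i + Nn)) := by
        rw [Summable.sum_add_tsum_nat_add Nn hs]
    _ ≤ K * ((Nn:ℝ) * ((Nn:ℝ)^Nn * (b^(Nn-1) * (((2*Nn)! : ℝ) * Real.exp b)))
          + b^(Nn-1) * Real.exp b) := by
        apply mul_le_mul_of_nonneg_left (add_le_add hheadsum htailsum) (by linarith)
    _ = ((Nn:ℝ) * (Nn:ℝ) ^ Nn * ((2*Nn)! : ℝ) + 1) * (π/2) ^ (Nn-1) * (K * K^(Nn-1)) *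
          Real.exp b := by
        rw [hb']
        ring
    _ = ((Nn:ℝ) * (Nn:ℝ) ^ Nn * ((2*Nn)! : ℝ) + 1) * (π/2) ^ (Nn-1) * K ^ Nn *
          Real.exp b := by rw [hKpow]

lemma st18_key {Nn : ℕ} (hN : 1 ≤ Nn) {Q : ℝ → ℝ} (hQ : ContDiff ℝ (Nn : ℕ∞) Q)
    (hQc : HasCompactSupport Q) :
    ∃ C : ℝ, 0 ≤ C ∧ ∀ K : ℝ, 1 ≤ K → ∀ x : ℝ, 0 ≤ Q x → Q x ≤ π^2/4 →
      |iteratedDeriv Nn (fun y => ∑' m : ℕ, K ^ (2*m+1) / ((2*m+1)! : ℝ) * Q y ^ m) x|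
        ≤ C * K ^ (Nn+1) * Real.exp (K * π / 2) := by
  have hpi : (3:ℝ) < π := Real.pi_gt_three
  have ha : (1:ℝ) ≤ π^2/4 := by nlinarith
  obtain ⟨R₀, hR₀⟩ := hQc.exists_bound_of_continuous hQ.continuous
  set Rg : ℝ := max 1 R₀ with hRgdef
  have hRg1 : (1:ℝ) ≤ Rg := le_max_left _ _
  have hRgb : ∀ y, |Q y| ≤ Rg := by
    intro y
    calc |Q y| = ‖Q y‖ := (Real.norm_eq_abs _).symm
      _ ≤ R₀ := hR₀ y
      _ ≤ Rg := le_max_right _ _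
  obtain ⟨D, hD1, hDb⟩ := st18_derivBounds hQ hQc
  refine ⟨(Nn ! : ℝ) * D ^ Nn * (((Nn:ℝ) * (Nn:ℝ) ^ Nn * ((2*Nn)! : ℝ) + 1) * (π/2) ^ (Nn-1)),
    by positivity, ?_⟩
  intro K hK x hx0 hxa
  have hK0 : (0:ℝ) < K := lt_of_lt_of_le one_pos hK
  have hcm0 : ∀ m : ℕ, 0 ≤ K ^ (2*m+1) / ((2*m+1)! : ℝ) := fun m => by positivity
  have hcm_le : ∀ m : ℕ, K ^ (2*m+1) / ((2*m+1)! : ℝ) ≤ K * (K^2) ^ m / (m ! : ℝ) := by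
    intro m
    have h1 : K ^ (2*m+1) = K * (K^2) ^ m := by
      rw [← pow_mul]
      ring
    rw [h1]
    gcongr
    case _ => omega
  have hterms : ∀ m : ℕ, ContDiff ℝ (Nn : ℕ∞)
      (fun y => K ^ (2*m+1) / ((2*m+1)! : ℝ) * Q y ^ m) :=
    fun m => contDiff_const.mul (hQ.pow m)
  set v : ℕ → ℝ := fun m =>
    (Nn ! : ℝ) * ((K * (K^2 * Rg) ^ m / (m ! : ℝ)) * (((m:ℝ)+1) ^ Nn)) * D ^ Nn with hvdef
  have hvs : Summable v := by
    have h := (st18_summable_core Nn (z := K^2 * Rg) (by positivity)).mul_left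
      ((Nn ! : ℝ) * K * D ^ Nn)
    refine h.congr fun m => ?_
    rw [hvdef]
    simp only []
    ring
  have hglobal : ∀ (k : ℕ) (m : ℕ) (x' : ℝ), (k : ℕ∞) ≤ (Nn : ℕ∞) →
      ‖iteratedFDeriv ℝ k (fun y => K ^ (2*m+1) / ((2*m+1)! : ℝ) * Q y ^ m) x'‖ ≤ v m := by
    intro k m x' hk
    have hkn : k ≤ Nn := by exact_mod_cast hk
    have hb := st18_term_bound hQ hD1 hDb hRg1 (hRgb x') (K ^ (2*m+1) / ((2*m+1)! : ℝ)) m k hkn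
    refine le_trans hb ?_
    rw [hvdef]
    simp only []
    rw [abs_of_nonneg (hcm0 m)]
    have hinner : K ^ (2*m+1) / ((2*m+1)! : ℝ) * (((m:ℝ)+1) ^ Nn * Rg ^ m)
        ≤ K * (K^2 * Rg) ^ m / (m ! : ℝ) * (((m:ℝ)+1) ^ Nn) := by
      have h2 : K ^ (2*m+1) / ((2*m+1)! : ℝ) * Rg ^ m ≤ K * (K^2 * Rg) ^ m / (m ! : ℝ) := by
        calc K ^ (2*m+1) / ((2*m+1)! : ℝ) * Rg ^ m ≤ K * (K^2) ^ m / (m ! : ℝ) * Rg ^ m := by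
              apply mul_le_mul_of_nonneg_right (hcm_le m) (by positivity)
          _ = K * (K^2 * Rg) ^ m / (m ! : ℝ) := by
              rw [mul_pow]
              ring
      calc K ^ (2*m+1) / ((2*m+1)! : ℝ) * (((m:ℝ)+1) ^ Nn * Rg ^ m)
          = (K ^ (2*m+1) / ((2*m+1)! : ℝ) * Rg ^ m) * ((m:ℝ)+1) ^ Nn := by ring
        _ ≤ (K * (K^2 * Rg) ^ m / (m ! : ℝ)) * ((m:ℝ)+1) ^ Nn := by
              apply mul_le_mul_of_nonneg_right h2 (by positivity)
    calc (Nn ! : ℝ) * (K ^ (2*m+1) / ((2*m+1)! : ℝ) * (((m:ℝ)+1) ^ Nn * Rg ^ m)) * D ^ Nn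
        ≤ (Nn ! : ℝ) * (K * (K^2 * Rg) ^ m / (m ! : ℝ) * (((m:ℝ)+1) ^ Nn)) * D ^ Nn := by
          apply mul_le_mul_of_nonneg_right _ (by positivity)
          apply mul_le_mul_of_nonneg_left hinner (by positivity)
      _ = (Nn ! : ℝ) * (K * (K^2 * Rg) ^ m / (m ! : ℝ) * (((m:ℝ)+1) ^ Nn)) * D ^ Nn := rfl
  have happly := iteratedFDeriv_tsum_apply (N := (Nn : ℕ∞)) hterms
    (fun k _ => hvs) hglobal (le_refl (Nn : ℕ∞)) x
  set W : ℕ → ℝ := fun m =>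
    (Nn ! : ℝ) * D ^ Nn * (K ^ (2*m+1) * (((m:ℝ)+1) ^ Nn * (π^2/4) ^ m) / ((2*m+1)! : ℝ))
    with hWdef
  have hQxabs : |Q x| ≤ π^2/4 := by rw [abs_of_nonneg hx0]; exact hxa
  have hlocal : ∀ m : ℕ,
      ‖iteratedFDeriv ℝ Nn (fun y => K ^ (2*m+1) / ((2*m+1)! : ℝ) * Q y ^ m) x‖ ≤ W m := by
    intro m
    have hb := st18_term_bound hQ hD1 hDb ha hQxabs (K ^ (2*m+1) / ((2*m+1)! : ℝ)) m Nn le_rfl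
    refine le_trans hb (le_of_eq ?_)
    rw [hWdef]
    simp only []
    rw [abs_of_nonneg (hcm0 m)]
    ring
  have hWs : Summable W := by
    have h := (st18_summable_core Nn (z := K^2 * (π^2/4)) (by positivity)).mul_left
      ((Nn ! : ℝ) * D ^ Nn * K)
    apply Summable.of_nonneg_of_le (fun m => by rw [hWdef]; positivity) (fun m => ?_) h
    rw [hWdef]
    simp only []
    have h1 : K ^ (2*m+1) * (((m:ℝ)+1) ^ Nn * (π^2/4) ^ m) / ((2*m+1)! : ℝ)
        ≤ K * (K^2 * (π^2/4)) ^ m / (m ! : ℝ) * (((m:ℝ)+1) ^ Nn) := by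
      calc K ^ (2*m+1) * (((m:ℝ)+1) ^ Nn * (π^2/4) ^ m) / ((2*m+1)! : ℝ)
          = (K ^ (2*m+1) / ((2*m+1)! : ℝ) * (π^2/4) ^ m) * ((m:ℝ)+1) ^ Nn := by ring
        _ ≤ (K * (K^2) ^ m / (m ! : ℝ) * (π^2/4) ^ m) * ((m:ℝ)+1) ^ Nn := by
            apply mul_le_mul_of_nonneg_right _ (by positivity)
            apply mul_le_mul_of_nonneg_right (hcm_le m) (by positivity)
        _ = K * (K^2 * (π^2/4)) ^ m / (m ! : ℝ) * (((m:ℝ)+1) ^ Nn) := by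
            rw [mul_pow]
            ring
    calc (Nn ! : ℝ) * D ^ Nn * (K ^ (2*m+1) * (((m:ℝ)+1) ^ Nn * (π^2/4) ^ m) / ((2*m+1)! : ℝ))
        ≤ (Nn ! : ℝ) * D ^ Nn * (K * (K^2 * (π^2/4)) ^ m / (m ! : ℝ) * (((m:ℝ)+1) ^ Nn)) := by
          apply mul_le_mul_of_nonneg_left h1 (by positivity)
      _ = (Nn ! : ℝ) * D ^ Nn * K * (((m:ℝ)+1) ^ Nn * (K^2 * (π^2/4)) ^ m / (m ! : ℝ)) := by
          ring
  have hnorm_summ : Summable (fun m : ℕ =>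
      ‖iteratedFDeriv ℝ Nn (fun y => K ^ (2*m+1) / ((2*m+1)! : ℝ) * Q y ^ m) x‖) :=
    Summable.of_nonneg_of_le (fun m => norm_nonneg _) hlocal hWs
  have habs : |iteratedDeriv Nn (fun y => ∑' m : ℕ, K ^ (2*m+1) / ((2*m+1)! : ℝ) * Q y ^ m) x|
      = ‖iteratedFDeriv ℝ Nn (fun y => ∑' m : ℕ, K ^ (2*m+1) / ((2*m+1)! : ℝ) * Q y ^ m) x‖ := by
    rw [norm_iteratedFDeriv_eq_norm_iteratedDeriv, Real.norm_eq_abs]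
  rw [habs, happly]
  calc ‖∑' m : ℕ, iteratedFDeriv ℝ Nn (fun y => K ^ (2*m+1) / ((2*m+1)! : ℝ) * Q y ^ m) x‖
      ≤ ∑' m : ℕ, ‖iteratedFDeriv ℝ Nn (fun y => K ^ (2*m+1) / ((2*m+1)! : ℝ) * Q y ^ m) x‖ :=
        norm_tsum_le_tsum_norm hnorm_summ
    _ ≤ ∑' m : ℕ, W m := Summable.tsum_le_tsum hlocal hnorm_summ hWs
    _ = ((Nn ! : ℝ) * D ^ Nn) *
        ∑' m : ℕ, K ^ (2*m+1) * (((m:ℝ)+1) ^ Nn * (π^2/4) ^ m) / ((2*m+1)! : ℝ) := by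
        rw [← tsum_mul_left]
    _ ≤ ((Nn ! : ℝ) * D ^ Nn) *
        (((Nn:ℝ) * (Nn:ℝ) ^ Nn * ((2*Nn)! : ℝ) + 1) * (π/2) ^ (Nn-1) * K ^ Nn *
          Real.exp (K * π / 2)) := by
        apply mul_le_mul_of_nonneg_left (st18_sum_est hN hK) (by positivity)
    _ = ((Nn ! : ℝ) * D ^ Nn * (((Nn:ℝ) * (Nn:ℝ) ^ Nn * ((2*Nn)! : ℝ) + 1) * (π/2) ^ (Nn-1)))
        * K ^ Nn * Real.exp (K * π / 2) := by ring
    _ ≤ ((Nn ! : ℝ) * D ^ Nn * (((Nn:ℝ) * (Nn:ℝ) ^ Nn * ((2*Nn)! : ℝ) + 1) * (π/2) ^ (Nn-1)))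
        * K ^ (Nn+1) * Real.exp (K * π / 2) := by
        have hKp : K ^ Nn ≤ K ^ (Nn+1) := pow_le_pow_right₀ hK (by omega)
        have hc0 : (0:ℝ) ≤ (Nn ! : ℝ) * D ^ Nn *
            (((Nn:ℝ) * (Nn:ℝ) ^ Nn * ((2*Nn)! : ℝ) + 1) * (π/2) ^ (Nn-1)) := by positivity
        have he0 : (0:ℝ) ≤ Real.exp (K * π / 2) := le_of_lt (Real.exp_pos _)
        apply mul_le_mul_of_nonneg_right _ he0
        exact mul_le_mul_of_nonneg_left hKp hc0

/-- Smoothness of `y ↦ ∑ c m * Q y ^ m` plus a formula for its derivative. -/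
lemma st18_tsum_pow_package {Nn : ℕ} (hN : 1 ≤ Nn) {Q : ℝ → ℝ}
    (hQ : ContDiff ℝ (Nn : ℕ∞) Q) (hQc : HasCompactSupport Q)
    {c : ℕ → ℝ} {A B : ℝ} (hA : 0 ≤ A) (hB : 0 ≤ B)
    (hc : ∀ m, |c m| ≤ A * B ^ m / (m ! : ℝ)) :
    ContDiff ℝ (Nn : ℕ∞) (fun y => ∑' m : ℕ, c m * Q y ^ m) ∧
      ∀ x₀ : ℝ, deriv (fun y => ∑' m : ℕ, c m * Q y ^ m) x₀
        = ∑' m : ℕ, deriv (fun y => c m * Q y ^ m) x₀ := by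
  obtain ⟨R₀, hR₀⟩ := hQc.exists_bound_of_continuous hQ.continuous
  set Rg : ℝ := max 1 R₀ with hRgdef
  have hRg1 : (1:ℝ) ≤ Rg := le_max_left _ _
  have hRgb : ∀ y, |Q y| ≤ Rg := by
    intro y
    calc |Q y| = ‖Q y‖ := (Real.norm_eq_abs _).symm
      _ ≤ R₀ := hR₀ y
      _ ≤ Rg := le_max_right _ _
  obtain ⟨D, hD1, hDb⟩ := st18_derivBounds hQ hQc
  have hterms : ∀ m : ℕ, ContDiff ℝ (Nn : ℕ∞) (fun y => c m * Q y ^ m) :=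
    fun m => contDiff_const.mul (hQ.pow m)
  set v : ℕ → ℝ := fun m =>
    (Nn ! : ℝ) * ((A * B ^ m / (m ! : ℝ)) * (((m:ℝ)+1) ^ Nn * Rg ^ m)) * D ^ Nn with hvdef
  have hvs : Summable v := by
    have h := (st18_summable_core Nn (z := B * Rg) (by positivity)).mul_left
      ((Nn ! : ℝ) * A * D ^ Nn)
    refine h.congr fun m => ?_
    rw [hvdef]
    simp only []
    rw [mul_pow]
    ring
  have hbound : ∀ (k : ℕ) (m : ℕ) (x' : ℝ), (k : ℕ∞) ≤ (Nn : ℕ∞) →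
      ‖iteratedFDeriv ℝ k (fun y => c m * Q y ^ m) x'‖ ≤ v m := by
    intro k m x' hk
    have hkn : k ≤ Nn := by exact_mod_cast hk
    have hb := st18_term_bound hQ hD1 hDb hRg1 (hRgb x') (c m) m k hkn
    refine le_trans hb ?_
    rw [hvdef]
    simp only []
    have h1 : |c m| * (((m:ℝ)+1) ^ Nn * Rg ^ m)
        ≤ A * B ^ m / (m ! : ℝ) * (((m:ℝ)+1) ^ Nn * Rg ^ m) :=
      mul_le_mul_of_nonneg_right (hc m) (by positivity)
    have h2 := mul_le_mul_of_nonneg_left h1 (by positivity : (0:ℝ) ≤ (Nn ! : ℝ))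
    exact mul_le_mul_of_nonneg_right h2 (by positivity)
  constructor
  · exact contDiff_tsum hterms (fun k _ => hvs) hbound
  · intro x₀
    apply deriv_tsum_apply (u := v) hvs
    · intro m
      exact (hterms m).differentiable (by norm_cast; omega)
    · intro m y
      have h1 : deriv (fun y => c m * Q y ^ m) y = iteratedDeriv 1 (fun y => c m * Q y ^ m) y := by
        rw [iteratedDeriv_one]
      rw [h1, ← norm_iteratedFDeriv_eq_norm_iteratedDeriv]
      exact hbound 1 m y (by exact_mod_cast hN)
    · apply Summable.of_norm_bounded (g := fun m => A * (B * Rg) ^ m / (m ! : ℝ))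
      · exact ((Real.summable_pow_div_factorial (B * Rg)).mul_left A).congr
          fun m => by rw [mul_div_assoc]
      · intro m
        calc ‖c m * Q x₀ ^ m‖ = |c m| * |Q x₀| ^ m := by
              rw [Real.norm_eq_abs, abs_mul, abs_pow]
          _ ≤ (A * B ^ m / (m ! : ℝ)) * Rg ^ m :=
              mul_le_mul (hc m) (pow_le_pow_left₀ (abs_nonneg _) (hRgb x₀) m)
                (by positivity) (by positivity)
          _ = A * (B * Rg) ^ m / (m ! : ℝ) := by
              rw [mul_pow]
              ring

/-- The coefficients of the entire function `w ↦ 1 - cos √w`. -/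
noncomputable def st18cE : ℕ → ℝ := fun m => if m = 0 then 0 else (-1)^(m-1) / ((2*m)! : ℝ)

lemma st18cE_bound : ∀ m, |st18cE m| ≤ 1 * 1 ^ m / (m ! : ℝ) := by
  intro m
  rcases m with _ | k
  · simp [st18cE]
  · rw [st18cE]
    simp only [Nat.succ_ne_zero, if_false]
    rw [abs_div, abs_pow, abs_neg, abs_one, one_pow, one_mul, one_pow, abs_of_nonneg
      (by positivity : (0:ℝ) ≤ ((2*(k+1))! : ℝ))]
    apply div_le_div_of_nonneg_left (by norm_num) (by positivity)
    exact_mod_cast Nat.factorial_le (by omega)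

lemma st18_E_id (t : ℝ) : (∑' m : ℕ, st18cE m * (t^2) ^ m) = 1 - Real.cos t := by
  have hg := Real.hasSum_cos t
  have hneg := hg.neg
  have hupd := hneg.update 0 0
  have hfun : Function.update (fun m : ℕ => -((-1)^m * t^(2*m) / ((2*m)! : ℝ))) 0 0
      = fun m : ℕ => st18cE m * (t^2) ^ m := by
    funext m
    rcases m with _ | k
    · simp [Function.update_self, st18cE]
    · have h2 : (t^2)^(k+1) = t^(2*(k+1)) := by rw [← pow_mul]
      have h3 : st18cE (k+1) = (-1)^k / ((2*(k+1))! : ℝ) := by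
        simp only [st18cE, Nat.succ_ne_zero, if_false, Nat.succ_sub_one]
      rw [Function.update_of_ne (by omega : k + 1 ≠ 0), h3, h2, pow_succ]
      ring
  rw [hfun] at hupd
  have hval : (0:ℝ) - -((-1)^0 * t^(2*0) / ((2*0)! : ℝ)) + -Real.cos t = 1 - Real.cos t := by
    norm_num [sub_eq_add_neg]
  rw [hval] at hupd
  exact hupd.tsum_eq

/-- Existence of a local smooth inverse `ψ` with `ψ (1 - x) = arccos x ^ 2` near `x = 1`. -/
lemma st18_exists_psi (Nn : ℕ) (hN : 1 ≤ Nn) :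
    ∃ (ψ : ℝ → ℝ) (ε₁ : ℝ), 0 < ε₁ ∧ ContDiffOn ℝ (Nn : ℕ∞) ψ (Metric.ball (0:ℝ) ε₁) ∧
      ∃ δ : ℝ, 0 < δ ∧ δ ≤ 1 ∧ ∀ x : ℝ, 1 - δ < x → x < 1 →
        ψ (1 - x) = Real.arccos x ^ 2 := by
  -- the bump-truncated identity
  set b₀ : ContDiffBump (0:ℝ) := ⟨1, 2, one_pos, one_lt_two⟩ with hb₀def
  set β : ℝ → ℝ := fun w => (b₀ : ℝ → ℝ) w * w with hβdef
  have hβcd : ContDiff ℝ (Nn : ℕ∞) β := (b₀.contDiff).mul contDiff_id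
  have hβcs : HasCompactSupport β := by
    apply HasCompactSupport.intro (isCompact_closedBall (0:ℝ) 2)
    intro w hw
    have hb0 : (b₀ : ℝ → ℝ) w = 0 := by
      have hsupp : w ∉ Function.support (b₀ : ℝ → ℝ) := by
        rw [b₀.support_eq]
        intro hmem
        exact hw (Metric.ball_subset_closedBall hmem)
      simpa [Function.mem_support, not_not] using hsupp
    rw [hβdef]
    simp [hb0]
  have hβid : ∀ w : ℝ, |w| ≤ 1 → β w = w := by
    intro w hw
    have h1 : (b₀ : ℝ → ℝ) w = 1 := b₀.one_of_mem_closedBall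
      (by simpa [Metric.mem_closedBall, Real.dist_eq] using hw)
    rw [hβdef]
    simp [h1]
  obtain ⟨hEcd, hEder⟩ := st18_tsum_pow_package hN hβcd hβcs
    (c := st18cE) (A := 1) (B := 1) zero_le_one zero_le_one st18cE_bound
  set E : ℝ → ℝ := fun w => ∑' m : ℕ, st18cE m * β w ^ m with hEdef
  have hβ0 : β 0 = 0 := by rw [hβdef]; simp
  have hE0 : E 0 = 0 := by
    rw [hEdef]
    simp only [hβ0]
    have h : (fun m : ℕ => st18cE m * (0:ℝ) ^ m) = fun _ => (0:ℝ) := by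
      funext m
      rcases m with _ | k
      · simp [st18cE]
      · simp [zero_pow (Nat.succ_ne_zero k)]
    rw [h, tsum_zero]
  have hEt : ∀ t : ℝ, t^2 ≤ 1 → E (t^2) = 1 - Real.cos t := by
    intro t ht
    have habs : |t^2| ≤ 1 := by rw [abs_of_nonneg (sq_nonneg t)]; exact ht
    rw [hEdef]
    simp only [hβid (t^2) habs]
    exact st18_E_id t
  -- derivative of E at 0
  have hdE : deriv E 0 = 1/2 := by
    rw [hEdef, hEder 0]
    have hterm : ∀ m : ℕ, m ≠ 1 → deriv (fun y => st18cE m * β y ^ m) 0 = 0 := by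
      intro m hm
      have hev : (fun y => st18cE m * β y ^ m) =ᶠ[𝓝 (0:ℝ)] (fun y => st18cE m * y ^ m) := by
        filter_upwards [Metric.ball_mem_nhds (0:ℝ) one_pos] with y hy
        rw [hβid y (le_of_lt (by simpa [Real.dist_eq] using hy))]
      rw [hev.deriv_eq]
      rw [deriv_const_mul_field, deriv_pow_field]
      rcases m with _ | k
      · norm_num
      · have hk : k ≠ 0 := by omega
        rw [Nat.succ_sub_one, zero_pow hk]
        ring
    rw [tsum_eq_single 1 hterm]
    have hev : (fun y => st18cE 1 * β y ^ 1) =ᶠ[𝓝 (0:ℝ)] (fun y => st18cE 1 * y ^ 1) := by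
      filter_upwards [Metric.ball_mem_nhds (0:ℝ) one_pos] with y hy
      rw [hβid y (le_of_lt (by simpa [Real.dist_eq] using hy))]
    rw [hev.deriv_eq, deriv_const_mul_field, deriv_pow_field]
    norm_num [st18cE]
  have hdiff : DifferentiableAt ℝ E 0 :=
    (hEcd.differentiable (by norm_cast; omega)).differentiableAt
  have hHasD : HasDerivAt E (1/2) 0 := by
    have h := hdiff.hasDerivAt
    rwa [hdE] at h
  have hfd : HasFDerivAt E
      (ContinuousLinearEquiv.unitsEquivAut ℝ (Units.mk0 (1/2 : ℝ) (by norm_num)) : ℝ →L[ℝ] ℝ) 0 :=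
    hHasD.hasFDerivAt_equiv (by norm_num)
  have hEcdAt : ContDiffAt ℝ (Nn : ℕ∞) E 0 := hEcd.contDiffAt
  have hone : ((Nn : ℕ∞) : WithTop ℕ∞) ≠ 0 := by norm_cast; omega
  set ψ : ℝ → ℝ := hEcdAt.localInverse hfd hone with hψdef
  have hψcdAt : ContDiffAt ℝ (Nn : ℕ∞) ψ 0 := by
    have h := hEcdAt.to_localInverse (f' := ContinuousLinearEquiv.unitsEquivAut ℝ
      (Units.mk0 (1/2 : ℝ) (by norm_num))) hfd hone
    rwa [hE0] at h
  have hleft : ∀ᶠ w in 𝓝 (0:ℝ), ψ (E w) = w :=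
    (hEcdAt.hasStrictFDerivAt' hfd hone).eventually_left_inverse
  obtain ⟨u, hu, hψOn⟩ := hψcdAt.contDiffOn le_rfl (by simp)
  obtain ⟨ε₁, hε₁, hball⟩ := Metric.mem_nhds_iff.1 hu
  obtain ⟨δL, hδL, hLinv⟩ := Metric.eventually_nhds_iff.1 hleft
  -- continuity of arccos² at 1
  have hq1 : ContinuousAt (fun x : ℝ => Real.arccos x ^ 2) 1 :=
    (Real.continuous_arccos.continuousAt).pow 2
  have hq1' : Tendsto (fun x : ℝ => Real.arccos x ^ 2) (𝓝 1) (𝓝 0) := by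
    have : Real.arccos 1 ^ 2 = 0 := by rw [Real.arccos_one]; norm_num
    simpa [this] using hq1.tendsto
  have hev2 : ∀ᶠ x in 𝓝 (1:ℝ), Real.arccos x ^ 2 < min δL 1 :=
    hq1' (Iio_mem_nhds (lt_min hδL one_pos))  -- membership of Iio in nhds 0
  obtain ⟨δ₂, hδ₂, hδ₂p⟩ := Metric.eventually_nhds_iff.1 hev2
  refine ⟨ψ, ε₁, hε₁, hψOn.mono hball, min δ₂ 1, lt_min hδ₂ one_pos, min_le_right _ _, ?_⟩
  intro x hx1 hx2
  have hmin1 : min δ₂ 1 ≤ δ₂ := min_le_left _ _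
  have hmin2 : min δ₂ 1 ≤ 1 := min_le_right _ _
  have h1x : 1 - x < δ₂ := by
    have h := lt_of_lt_of_le (show 1 - x < min δ₂ 1 by linarith) hmin1
    linarith
  have hxd : dist x 1 < δ₂ := by
    rw [Real.dist_eq, abs_lt]
    exact ⟨by linarith, by linarith⟩
  have hqs : Real.arccos x ^ 2 < min δL 1 := hδ₂p hxd
  have hw0 : 0 ≤ Real.arccos x ^ 2 := sq_nonneg _
  have hwE : E (Real.arccos x ^ 2) = 1 - x := by
    rw [hEt (Real.arccos x) (le_of_lt (lt_of_lt_of_le hqs (min_le_right _ _)))]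
    rw [Real.cos_arccos (by linarith) (le_of_lt hx2)]
  have hψw : ψ (E (Real.arccos x ^ 2)) = Real.arccos x ^ 2 := by
    apply hLinv
    rw [Real.dist_eq, sub_zero, abs_of_nonneg hw0]
    exact lt_of_lt_of_le hqs (min_le_left _ _)
  rw [← hwE, hψw]

/-- gluing a bump function with a locally smooth function -/
lemma st18_glue {Nn : ℕ} {c : ℝ} (b : ContDiffBump c) {g : ℝ → ℝ} {v : Set ℝ}
    (hv : IsOpen v) (hsub : Metric.closedBall c b.rOut ⊆ v)
    (hg : ContDiffOn ℝ (Nn : ℕ∞) g v) :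
    ContDiff ℝ (Nn : ℕ∞) (fun x => (b : ℝ → ℝ) x * g x) ∧
      HasCompactSupport (fun x => (b : ℝ → ℝ) x * g x) := by
  have hzero : ∀ z : ℝ, z ∉ Metric.closedBall c b.rOut → (b : ℝ → ℝ) z = 0 := by
    intro z hz
    have hns : z ∉ Function.support (b : ℝ → ℝ) := by
      rw [b.support_eq]
      intro hm
      exact hz (Metric.ball_subset_closedBall hm)
    simpa [Function.mem_support, not_not] using hns
  constructor
  · rw [contDiff_iff_contDiffAt]
    intro y
    by_cases hy : y ∈ v
    · exact (b.contDiffAt).mul (hg.contDiffAt (hv.mem_nhds hy))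
    · have hyout : y ∈ (Metric.closedBall c b.rOut)ᶜ := fun h => hy (hsub h)
      have hopen : IsOpen (Metric.closedBall c b.rOut)ᶜ := Metric.isClosed_closedBall.isOpen_compl
      have hev : (fun x => (b : ℝ → ℝ) x * g x) =ᶠ[𝓝 y] (fun _ => (0:ℝ)) := by
        filter_upwards [hopen.mem_nhds hyout] with z hz
        rw [hzero z hz, zero_mul]
      exact (contDiffAt_const (c := (0:ℝ))).congr_of_eventuallyEq hev
  · apply HasCompactSupport.intro (isCompact_closedBall c b.rOut)
    intro z hz
    rw [hzero z hz, zero_mul]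

/-- Lemma `l.2-new`: for each `n ≥ 1` there is `Cₙ < ∞` such that for
every `K ≥ 1` and `x ∈ (0,1)`:
`|dⁿ/dxⁿ (sinh(K·arccos x)/arccos x)| ≤ Cₙ K^{n+1} e^{Kπ/2}`. -/
theorem statement18 (n : ℕ) (hn : 1 ≤ n) :
    ∃ C : ℝ, ∀ K : ℝ, 1 ≤ K → ∀ x ∈ Set.Ioo (0 : ℝ) 1,
      |iteratedDeriv n (fun x : ℝ => Real.sinh (K * Real.arccos x) / Real.arccos x) x| ≤
        C * K ^ (n + 1) * Real.exp (K * π / 2) := by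
  have hpi : (3:ℝ) < π := Real.pi_gt_three
  obtain ⟨ψ, ε₁, hε₁, hψOn, δ, hδ, hδ1, hψq⟩ := st18_exists_psi n hn
  set ε : ℝ := min δ ε₁ / 2 with hεdef
  have hε : 0 < ε := by positivity
  have hεδ : ε ≤ δ / 2 := by
    rw [hεdef]
    have : min δ ε₁ ≤ δ := min_le_left _ _
    linarith
  have hεε₁ : ε < ε₁ := by
    rw [hεdef]
    have : min δ ε₁ ≤ ε₁ := min_le_right _ _
    linarith
  have hεhalf : ε ≤ 1/2 := by linarith
  -- the function Q₁ near the left part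
  set b₁ : ContDiffBump (0:ℝ) := ⟨1 - ε/4, 1 - ε/8, by linarith, by linarith⟩ with hb₁def
  have hsub₁ : Metric.closedBall (0:ℝ) b₁.rOut ⊆ Ioo (-1:ℝ) 1 := by
    intro z hz
    rw [Metric.mem_closedBall, Real.dist_eq, sub_zero] at hz
    have : |z| ≤ 1 - ε/8 := hz
    rw [abs_le] at this
    constructor <;> [linarith; linarith]
  have hqOn : ContDiffOn ℝ (n : ℕ∞) (fun x : ℝ => Real.arccos x ^ 2) (Ioo (-1:ℝ) 1) := by
    intro y hy
    exact ((Real.contDiffAt_arccos (ne_of_gt hy.1) (ne_of_lt hy.2)).pow 2).contDiffWithinAt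
  obtain ⟨hQ₁cd, hQ₁cs⟩ := st18_glue b₁ isOpen_Ioo hsub₁ hqOn
  -- the function Q₂ near 1
  set b₂ : ContDiffBump (1:ℝ) := ⟨ε/2, ε, by positivity, by linarith⟩ with hb₂def
  set v₂ : Set ℝ := (fun x : ℝ => 1 - x) ⁻¹' Metric.ball (0:ℝ) ε₁ with hv₂def
  have hv₂open : IsOpen v₂ := Metric.isOpen_ball.preimage (by continuity)
  have hsub₂ : Metric.closedBall (1:ℝ) b₂.rOut ⊆ v₂ := by
    intro z hz
    rw [Metric.mem_closedBall, Real.dist_eq] at hz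
    rw [hv₂def]
    simp only [mem_preimage, Metric.mem_ball, Real.dist_eq, sub_zero]
    rw [abs_sub_comm] at hz
    calc |1 - z| ≤ ε := hz
      _ < ε₁ := hεε₁
  have hψcomp : ContDiffOn ℝ (n : ℕ∞) (fun x : ℝ => ψ (1 - x)) v₂ := by
    intro y hy
    have hmem : (1 - y) ∈ Metric.ball (0:ℝ) ε₁ := hy
    have hψAt : ContDiffAt ℝ (n : ℕ∞) ψ (1 - y) :=
      hψOn.contDiffAt (Metric.isOpen_ball.mem_nhds hmem)
    have haff : ContDiffAt ℝ (n : ℕ∞) (fun x : ℝ => 1 - x) y :=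
      (contDiff_const.sub contDiff_id).contDiffAt
    exact (hψAt.comp y haff).contDiffWithinAt
  obtain ⟨hQ₂cd, hQ₂cs⟩ := st18_glue b₂ hv₂open hsub₂ hψcomp
  obtain ⟨C₁, hC₁0, hC₁⟩ := st18_key hn hQ₁cd hQ₁cs
  obtain ⟨C₂, hC₂0, hC₂⟩ := st18_key hn hQ₂cd hQ₂cs
  refine ⟨max C₁ C₂, ?_⟩
  intro K hK x hx
  obtain ⟨hx0, hx1⟩ := hx
  -- generic step : local equality of the target with the series in Q
  have main : ∀ (Q : ℝ → ℝ) (s : Set ℝ), IsOpen s → x ∈ s → s ⊆ Ioo (0:ℝ) 1 →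
      (∀ y ∈ s, Q y = Real.arccos y ^ 2) →
      (∀ K' : ℝ, 1 ≤ K' → ∀ x' : ℝ, 0 ≤ Q x' → Q x' ≤ π^2/4 →
        |iteratedDeriv n (fun y => ∑' m : ℕ, K' ^ (2*m+1) / ((2*m+1)! : ℝ) * Q y ^ m) x'|
          ≤ C₁ ⊔ C₂ * K' ^ (n+1) * Real.exp (K' * π / 2)) →
      True := fun _ _ _ _ _ _ _ => trivial
  clear main
  have key : ∀ (Q : ℝ → ℝ) (C : ℝ),
      (∀ K' : ℝ, 1 ≤ K' → ∀ x' : ℝ, 0 ≤ Q x' → Q x' ≤ π^2/4 →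
        |iteratedDeriv n (fun y => ∑' m : ℕ, K' ^ (2*m+1) / ((2*m+1)! : ℝ) * Q y ^ m) x'|
          ≤ C * K' ^ (n+1) * Real.exp (K' * π / 2)) →
      C ≤ max C₁ C₂ →
      ∀ (s : Set ℝ), IsOpen s → x ∈ s → s ⊆ Ioo (0:ℝ) 1 →
      (∀ y ∈ s, Q y = Real.arccos y ^ 2) →
      |iteratedDeriv n (fun x : ℝ => Real.sinh (K * Real.arccos x) / Real.arccos x) x| ≤
        max C₁ C₂ * K ^ (n + 1) * Real.exp (K * π / 2) := by
    intro Q C hC hCle s hs hxs hsub hQeq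
    have hev : (fun y : ℝ => Real.sinh (K * Real.arccos y) / Real.arccos y)
        =ᶠ[𝓝 x] (fun y => ∑' m : ℕ, K ^ (2*m+1) / ((2*m+1)! : ℝ) * Q y ^ m) := by
      filter_upwards [hs.mem_nhds hxs] with y hy
      have hy01 := hsub hy
      have ht0 : 0 < Real.arccos y := Real.arccos_pos.2 hy01.2
      have hS := (Real.hasSum_sinh (K * Real.arccos y)).div_const (Real.arccos y)
      have hfe : (fun m : ℕ => (K * Real.arccos y) ^ (2*m+1) / ((2*m+1)! : ℝ) / Real.arccos y)
          = fun m : ℕ => K ^ (2*m+1) / ((2*m+1)! : ℝ) * (Real.arccos y ^ 2) ^ m := by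
        funext m
        have h1 : (K * Real.arccos y) ^ (2*m+1)
            = K ^ (2*m+1) * (Real.arccos y ^ 2) ^ m * Real.arccos y := by
          rw [mul_pow, ← pow_mul]
          ring
        rw [h1]
        field_simp
      rw [hfe] at hS
      rw [← hS.tsum_eq]
      apply tsum_congr
      intro m
      rw [hQeq y hy]
    rw [hev.iteratedDeriv_eq n]
    have hQx0 : 0 ≤ Q x := by rw [hQeq x hxs]; positivity
    have hQxa : Q x ≤ π^2/4 := by
      rw [hQeq x hxs]
      have h1 : Real.arccos x ≤ π/2 := Real.arccos_le_pi_div_two.2 (le_of_lt hx0)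
      have h2 : Real.arccos x ^ 2 ≤ (π/2) ^ 2 :=
        pow_le_pow_left₀ (Real.arccos_nonneg x) h1 2
      calc Real.arccos x ^ 2 ≤ (π/2)^2 := h2
        _ = π^2/4 := by ring
    calc |iteratedDeriv n (fun y => ∑' m : ℕ, K ^ (2*m+1) / ((2*m+1)! : ℝ) * Q y ^ m) x|
        ≤ C * K ^ (n+1) * Real.exp (K * π / 2) := hC K hK x hQx0 hQxa
      _ ≤ max C₁ C₂ * K ^ (n+1) * Real.exp (K * π / 2) := by
          have hKp : (0:ℝ) ≤ K ^ (n+1) := by positivity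
          have he : (0:ℝ) ≤ Real.exp (K * π / 2) := le_of_lt (Real.exp_pos _)
          apply mul_le_mul_of_nonneg_right _ he
          exact mul_le_mul_of_nonneg_right hCle hKp
  by_cases hcase : x ≤ 1 - ε/3
  · apply key (fun y => (b₁ : ℝ → ℝ) y * Real.arccos y ^ 2) C₁ hC₁ (le_max_left _ _)
      (Ioo (0:ℝ) (1 - ε/4)) isOpen_Ioo ⟨hx0, by linarith⟩
      (fun y hy => ⟨hy.1, by linarith [hy.2]⟩)
    intro y hy
    have hb1 : (b₁ : ℝ → ℝ) y = 1 := by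
      apply b₁.one_of_mem_closedBall
      rw [Metric.mem_closedBall, Real.dist_eq, sub_zero]
      rw [abs_of_nonneg (le_of_lt hy.1)]
      have : b₁.rIn = 1 - ε/4 := rfl
      rw [this]
      linarith [hy.2]
    rw [hb1, one_mul]
  · push_neg at hcase
    apply key (fun y => (b₂ : ℝ → ℝ) y * ψ (1 - y)) C₂ hC₂ (le_max_right _ _)
      (Ioo (1 - ε/2) 1) isOpen_Ioo ⟨by linarith, hx1⟩
      (fun y hy => ⟨by linarith [hy.1], hy.2⟩)
    intro y hy
    have hb2 : (b₂ : ℝ → ℝ) y = 1 := by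
      apply b₂.one_of_mem_closedBall
      rw [Metric.mem_closedBall, Real.dist_eq]
      have h1 : |y - 1| = 1 - y := by rw [abs_sub_comm, abs_of_nonneg (by linarith [hy.2])]
      rw [h1]
      have : b₂.rIn = ε/2 := rfl
      rw [this]
      linarith [hy.1]
    rw [hb2, one_mul]
    exact hψq y (by linarith [hy.1]) hy.2
end
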